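/- arXiv:1901.10432 — 6 statements merged into one kernel-verified Lean document; each statement's English description precedes it below -/
import Mathlib

section
/- Let X be a ℤ²-subshift and let H be an open or closed half plane in ℝ². Then either H X-codes all of ℝ², or H X-codes no point of ℤ² \ H. In particular, if some subset of H X-codes some point of ℤ² \ H, then H X-codes all of ℝ². -/
namespace PolygonalShifts

abbrev Z2 : Type := ℤ × ℤ

abbrev Config (A : Type*) : Type _ := Z2 → A

/-- The translation action of `ℤ²` on configurations. -/
def shiftAct {A : Type*} (u : Z2) (x : Config A) : Config A := fun w => x (u + w)

/-- A `ℤ²`-subshift: a closed (for the product topology, with the alphabet discrete)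
and translation-invariant set of configurations. -/
def IsSubshift {A : Type*} (X : Set (Config A)) : Prop :=
  (letI : TopologicalSpace A := ⊥
   IsClosed X) ∧
  ∀ u : Z2, ∀ x ∈ X, shiftAct u x ∈ X

/-- The canonical embedding `ℤ² → ℝ²`. -/
def toR2 (p : Z2) : ℝ × ℝ := ((p.1 : ℝ), (p.2 : ℝ))

/-- `S` X-codes `S'`, for subsets `S, S'` of `ℝ²`. -/
def Codes {A : Type*} (X : Set (Config A)) (S S' : Set (ℝ × ℝ)) : Prop :=
  ∀ x ∈ X, ∀ x' ∈ X,
    (∀ p : Z2, toR2 p ∈ S → x p = x' p) →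
    ∀ p : Z2, toR2 p ∈ S' → x p = x' p

/-- `S` X-codes `S'`, for subsets `S, S'` of `ℤ²`. -/
def CodesZ {A : Type*} (X : Set (Config A)) (S S' : Set Z2) : Prop :=
  ∀ x ∈ X, ∀ x' ∈ X, (∀ p ∈ S, x p = x' p) → ∀ p ∈ S', x p = x' p

/-- `Y` is a recoding of `X` via the finite set `F ⊆ ℤ²`. -/
def IsRecodingVia {A A' : Type*} (X : Set (Config A)) (Y : Set (Config A'))
    (F : Set Z2) : Prop :=
  letI : TopologicalSpace A := ⊥
  letI : TopologicalSpace A' := ⊥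
  ∃ Ψ : X ≃ₜ Y,
    (∀ (u : Z2) (x x' : X), (x' : Config A) = shiftAct u (x : Config A) →
      (↑(Ψ x') : Config A') = shiftAct u (↑(Ψ x) : Config A')) ∧
    (∀ (u : Z2) (x x' : X),
      (↑(Ψ x) : Config A') u = (↑(Ψ x') : Config A') u ↔
        ∀ f ∈ F, (x : Config A) (f + u) = (x' : Config A) (f + u))

/-- `Y` is a recoding of `X`. -/
def IsRecoding {A A' : Type*} (X : Set (Config A)) (Y : Set (Config A')) : Prop :=
  ∃ F : Set Z2, F.Finite ∧ IsRecodingVia X Y F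

/-- Integer cross product. -/
def crossZ (u v : Z2) : ℤ := u.1 * v.2 - u.2 * v.1

/-- Real cross product. -/
def crossR (u v : ℝ × ℝ) : ℝ := u.1 * v.2 - u.2 * v.1

/-- A convex integer polygon, given by its (at least three) vertices listed in
counterclockwise order: every vertex lies strictly to the left of every directed edge. -/
structure IntPolygon where
  n : ℕ
  vert : Fin (n + 3) → Z2
  convex : ∀ i j : Fin (n + 3), j ≠ i → j ≠ i + 1 →
    0 < crossZ (vert (i + 1) - vert i) (vert j - vert i)

namespace IntPolygon

/-- The oriented edge vector from vertex `i` to vertex `i+1`. -/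
def edgeVec (P : IntPolygon) (i : Fin (P.n + 3)) : Z2 := P.vert (i + 1) - P.vert i

/-- The polygon as a subset of `ℝ²` (the convex hull of its vertices). -/
def carrier (P : IntPolygon) : Set (ℝ × ℝ) :=
  convexHull ℝ (Set.range fun i => toR2 (P.vert i))

lemma crossZ_smul (m : ℤ) (u v : Z2) : crossZ (m • u) (m • v) = m ^ 2 * crossZ u v := by
  simp only [crossZ, Prod.smul_fst, Prod.smul_snd, smul_eq_mul]
  ring

/-- The dilation of a polygon by a positive integer factor about the origin. -/
def dilate (P : IntPolygon) (m : ℤ) (hm : 0 < m) : IntPolygon where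
  n := P.n
  vert := fun i => m • P.vert i
  convex := by
    intro i j hj hj1
    have h := P.convex i j hj hj1
    have e1 : m • P.vert (i + 1) - m • P.vert i = m • (P.vert (i + 1) - P.vert i) :=
      (smul_sub m _ _).symm
    have e2 : m • P.vert j - m • P.vert i = m • (P.vert j - P.vert i) :=
      (smul_sub m _ _).symm
    rw [e1, e2, crossZ_smul]
    exact mul_pos (pow_pos hm 2) h

end IntPolygon

/-- `P` is a coding polygon for `X`: for each vertex `w`, the polygon with `w`
removed X-codes `w`. -/
def IsCodingPolygon {A : Type*} (X : Set (Config A)) (P : IntPolygon) : Prop :=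
  ∀ i : Fin (P.n + 3),
    Codes X (P.carrier \ {toR2 (P.vert i)}) {toR2 (P.vert i)}

/-- `X` is polygonal with respect to `P`. -/
def Polygonal {A : Type*} (X : Set (Config A)) (P : IntPolygon) : Prop :=
  X.Infinite ∧ IsCodingPolygon X P

/-- The closed half plane `H_v = {w : v₁ w₂ − v₂ w₁ ≥ 0}` to the left of the direction `v`. -/
def leftHalfPlane (v : ℝ × ℝ) : Set (ℝ × ℝ) := {w | 0 ≤ v.1 * w.2 - v.2 * w.1}

/-- The ray directed by `v` is expansive for `X`: `H_v` X-codes all of `ℝ²`. -/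
def ExpansiveRay {A : Type*} (X : Set (Config A)) (v : ℝ × ℝ) : Prop :=
  Codes X (leftHalfPlane v) Set.univ

/-- For a primitive integer direction `v`, the line `L₀`: the translate of `L = ℝ·v`
by an integer vector, lying outside `H_v` and closest to `L`. -/
def lineL0 (v : Z2) : Set (ℝ × ℝ) := {w | (v.1 : ℝ) * w.2 - (v.2 : ℝ) * w.1 = -1}

/-- A block of `m` consecutive lattice points on `L₀`, starting at `z`. -/
def blockOn (v z : Z2) (m : ℕ) : Set (ℝ × ℝ) :=
  (fun k : ℕ => toR2 (z + (k : ℤ) • v)) '' {k | k < m}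

/-- The (nonexpansive) rational ray directed by the primitive vector `v` is closing for `X`. -/
def ClosingRay {A : Type*} (X : Set (Config A)) (v : Z2) : Prop :=
  ∃ N : ℕ, ∀ z : Z2, v.1 * z.2 - v.2 * z.1 = -1 →
    ∀ m : ℕ, N ≤ m →
      Codes X (leftHalfPlane (toR2 v) ∪ blockOn v z m) (lineL0 v)

/-- The sector (with vertex the origin) determined by the rays through `e₁` and `e₂`:
lattice points on either ray or strictly between them. -/
def SectorZ (e₁ e₂ : Z2) : Set Z2 :=
  {p | SameRay ℝ (toR2 e₁) (toR2 p) ∨ SameRay ℝ (toR2 e₂) (toR2 p) ∨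
       (0 < crossZ e₁ p ∧ 0 < crossZ p e₂)}

/-- The rational sector determined by `(e₁, e₂)` is corner coding for `X`. -/
def IsCornerCoding {A : Type*} (X : Set (Config A)) (e₁ e₂ : Z2) : Prop :=
  CodesZ X (SectorZ e₁ e₂ \ {0}) {0}

/-- The rational sector determined by `(e₁, e₂)` is weakly corner coding for `X`. -/
def IsWeaklyCornerCoding {A : Type*} (X : Set (Config A)) (e₁ e₂ : Z2) : Prop :=
  ∃ F₀ : Set Z2, F₀.Finite ∧ F₀ ⊆ SectorZ e₁ e₂ ∧
    ∀ F : Set Z2, F.Finite → F ⊆ SectorZ e₁ e₂ →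
      CodesZ X (SectorZ e₁ e₂ \ F) (SectorZ e₁ e₂ \ F₀)

/-- The sector based at the vertex `i` of the polygon `P`: lattice points in the convex
cone with apex `P.vert i` spanned by the two edges of `P` incident to that vertex. -/
def vertexSector (P : IntPolygon) (i : Fin (P.n + 3)) : Set Z2 :=
  {p | ∃ s t : ℝ, 0 ≤ s ∧ 0 ≤ t ∧
    toR2 p = toR2 (P.vert i) + s • toR2 (P.vert (i - 1) - P.vert i)
      + t • toR2 (P.vert (i + 1) - P.vert i)}

/-- `P` is a coding polygon for some recoding of `X`. -/
def HasRecodingPolygon {A : Type*} (X : Set (Config A)) (P : IntPolygon) : Prop :=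
  ∃ (A' : Type) (_ : Fintype A') (Y : Set (Config A')),
    IsSubshift Y ∧ IsRecoding X Y ∧ IsCodingPolygon Y P

/-- `P` is a minimal recoding polygon for `X`. -/
def IsMinimalRecodingPolygon {A : Type*} (X : Set (Config A)) (P : IntPolygon) : Prop :=
  HasRecodingPolygon X P ∧
  (∀ Q : IntPolygon, HasRecodingPolygon X Q → P.n ≤ Q.n) ∧
  (∀ Q : IntPolygon, HasRecodingPolygon X Q → Q.n = P.n →
    Q.carrier ⊆ P.carrier → Q.carrier = P.carrier)


/-- A (closed or open) half plane in `ℝ²`. -/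
def IsHalfPlane (H : Set (ℝ × ℝ)) : Prop :=
  ∃ a b c : ℝ, (a, b) ≠ (0, 0) ∧
    (H = {w : ℝ × ℝ | a * w.1 + b * w.2 ≥ c} ∨ H = {w : ℝ × ℝ | a * w.1 + b * w.2 > c})


/-- Compactness: from an infinite coding set, extract a finite coding window. -/
lemma finite_code {A : Type} [Fintype A] (X : Set (Config A))
    (hXc : letI : TopologicalSpace A := ⊥; IsClosed X) (S : Set Z2) (p : Z2)
    (hcode : ∀ x ∈ X, ∀ x' ∈ X, (∀ w ∈ S, x w = x' w) → x p = x' p) :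
    ∃ F : Finset Z2, (∀ w ∈ F, w ∈ S) ∧
      ∀ x ∈ X, ∀ x' ∈ X, (∀ w ∈ F, x w = x' w) → x p = x' p := by
  letI : TopologicalSpace A := ⊥
  haveI : DiscreteTopology A := ⟨rfl⟩
  by_contra hcon
  push_neg at hcon
  set Z : {F : Finset Z2 // ∀ w ∈ F, w ∈ S} → Set (Config A × Config A) := fun F =>
    (X ×ˢ X) ∩ ((⋂ w ∈ (F : Finset Z2), {z : Config A × Config A | z.1 w = z.2 w}) ∩
      {z : Config A × Config A | z.1 p = z.2 p}ᶜ) with hZ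
  have hmem : ∀ F z, z ∈ Z F ↔ z.1 ∈ X ∧ z.2 ∈ X ∧ (∀ w ∈ (F : Finset Z2), z.1 w = z.2 w) ∧
      z.1 p ≠ z.2 p := by
    intro F z
    simp only [hZ, Set.mem_inter_iff, Set.mem_prod, Set.mem_iInter, Set.mem_setOf_eq,
      Set.mem_compl_iff]
    tauto
  have hne : ∀ F, (Z F).Nonempty := by
    rintro ⟨F, hF⟩
    obtain ⟨x, hx, x', hx', hagr, hnep⟩ := hcon F hF
    exact ⟨(x, x'), (hmem _ _).mpr ⟨hx, hx', hagr, hnep⟩⟩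
  have hdir : Directed (· ⊇ ·) Z := by
    rintro ⟨F, hF⟩ ⟨G, hG⟩
    refine ⟨⟨F ∪ G, ?_⟩, ?_, ?_⟩
    · intro w hw
      rcases Finset.mem_union.mp hw with h | h
      · exact hF w h
      · exact hG w h
    · intro z hz
      rw [hmem] at hz ⊢
      exact ⟨hz.1, hz.2.1, fun w hw => hz.2.2.1 w (Finset.mem_union_left _ hw), hz.2.2.2⟩
    · intro z hz
      rw [hmem] at hz ⊢
      exact ⟨hz.1, hz.2.1, fun w hw => hz.2.2.1 w (Finset.mem_union_right _ hw), hz.2.2.2⟩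
  have hcl : ∀ F, IsClosed (Z F) := by
    intro F
    refine (hXc.prod hXc).inter (IsClosed.inter ?_ ?_)
    · refine isClosed_biInter fun w _ => ?_
      exact isClosed_eq ((continuous_apply w).comp continuous_fst)
        ((continuous_apply w).comp continuous_snd)
    · refine IsOpen.isClosed_compl ?_
      have hcont : Continuous (fun z : Config A × Config A => (z.1 p, z.2 p)) :=
        ((continuous_apply p).comp continuous_fst).prodMk
          ((continuous_apply p).comp continuous_snd)
      exact (isOpen_discrete {q : A × A | q.1 = q.2}).preimage hcont
  haveI : Nonempty {F : Finset Z2 // ∀ w ∈ F, w ∈ S} := ⟨⟨∅, by simp⟩⟩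
  have hcomp : ∀ F, IsCompact (Z F) := fun F => (hcl F).isCompact
  obtain ⟨z, hz⟩ := IsCompact.nonempty_iInter_of_directed_nonempty_isCompact_isClosed
    Z hdir hne hcomp hcl
  have hz0 := (hmem ⟨∅, by simp⟩ z).mp (Set.mem_iInter.mp hz _)
  have hagr : ∀ w ∈ S, z.1 w = z.2 w := by
    intro w hw
    have := (hmem ⟨{w}, by simpa using hw⟩ z).mp (Set.mem_iInter.mp hz _)
    exact this.2.2.1 w (Finset.mem_singleton_self w)
  exact hz0.2.2.2 (hcode z.1 hz0.1 z.2 hz0.2.1 hagr)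

/-- Key induction: a finite coding window strictly inside the half plane lets the
agreement region sweep all of the plane by translation. -/
lemma key_lemma {A : Type} (X : Set (Config A))
    (hshift : ∀ u : Z2, ∀ x ∈ X, shiftAct u x ∈ X)
    (a b c γ : ℝ) (hγ : 0 < γ) (F : Finset Z2) (p : Z2)
    (hF : ∀ w ∈ F, a * (p.1 : ℝ) + b * (p.2 : ℝ) + γ ≤ a * (w.1 : ℝ) + b * (w.2 : ℝ))
    (hcode : ∀ x ∈ X, ∀ x' ∈ X, (∀ w ∈ F, x w = x' w) → x p = x' p) :
    ∀ x ∈ X, ∀ x' ∈ X,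
      (∀ q : Z2, c < a * (q.1 : ℝ) + b * (q.2 : ℝ) → x q = x' q) → ∀ q : Z2, x q = x' q := by
  intro x hx x' hx' hagree
  have main : ∀ n : ℕ, ∀ q : Z2, c - n * γ < a * (q.1 : ℝ) + b * (q.2 : ℝ) → x q = x' q := by
    intro n
    induction n with
    | zero => simpa using hagree
    | succ n ih =>
      intro q hq
      have hstep : ∀ w ∈ F, (shiftAct (q - p) x) w = (shiftAct (q - p) x') w := by
        intro w hw
        show x ((q - p) + w) = x' ((q - p) + w)
        apply ih
        have h1 := hF w hw
        have e1 : (((q - p) + w).1 : ℝ) = (q.1 : ℝ) - (p.1 : ℝ) + (w.1 : ℝ) := by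
          push_cast [Prod.fst_add, Prod.fst_sub]
          ring
        have e2 : (((q - p) + w).2 : ℝ) = (q.2 : ℝ) - (p.2 : ℝ) + (w.2 : ℝ) := by
          push_cast [Prod.snd_add, Prod.snd_sub]
          ring
        rw [e1, e2]
        push_cast at hq
        nlinarith [hq, h1]
      have h2 := hcode _ (hshift (q - p) x hx) _ (hshift (q - p) x' hx') hstep
      have e3 : (q - p) + p = q := sub_add_cancel q p
      simpa [shiftAct, e3] using h2
  intro q
  obtain ⟨n, hn⟩ := exists_nat_gt ((c - (a * (q.1 : ℝ) + b * (q.2 : ℝ))) / γ)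
  refine main n q ?_
  have := (div_lt_iff₀ hγ).mp hn
  linarith

/-- a half plane either X-codes all of `ℝ²` or codes no point of `ℤ² \ H`;
in particular if a subset of `H` X-codes some point of `ℤ² \ H` then `H` X-codes `ℝ²`. -/
theorem statement1 {A : Type} [Fintype A] [Nonempty A] (X : Set (Config A))
    (hX : IsSubshift X) (H : Set (ℝ × ℝ)) (hH : IsHalfPlane H) :
    (Codes X H Set.univ ∨ ∀ p : Z2, toR2 p ∉ H → ¬ Codes X H {toR2 p}) ∧
    ((∃ S : Set (ℝ × ℝ), S ⊆ H ∧ ∃ p : Z2, toR2 p ∉ H ∧ Codes X S {toR2 p}) →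
      Codes X H Set.univ) := by
  obtain ⟨a, b, c, hab, hHcase⟩ := hH
  have M : (∃ p : Z2, toR2 p ∉ H ∧ Codes X H {toR2 p}) → Codes X H Set.univ := by
    rintro ⟨p, hp, hcode⟩
    have hcodeZ : ∀ x ∈ X, ∀ x' ∈ X,
        (∀ w ∈ {w : Z2 | toR2 w ∈ H}, x w = x' w) → x p = x' p := by
      intro x hx x' hx' hagr
      exact hcode x hx x' hx' hagr p rfl
    obtain ⟨F, hFS, hFcode⟩ := finite_code X hX.1 _ p hcodeZ
    have hγex : ∃ γ : ℝ, 0 < γ ∧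
        ∀ w ∈ F, a * (p.1 : ℝ) + b * (p.2 : ℝ) + γ ≤ a * (w.1 : ℝ) + b * (w.2 : ℝ) := by
      rcases hHcase with hclosed | hopen
      · have hpc : a * (p.1 : ℝ) + b * (p.2 : ℝ) < c := by
          rw [hclosed] at hp
          simpa [toR2] using not_le.mp hp
        refine ⟨c - (a * (p.1 : ℝ) + b * (p.2 : ℝ)), by linarith, fun w hw => ?_⟩
        have := hFS w hw
        rw [hclosed] at this
        simp only [Set.mem_setOf_eq, toR2, ge_iff_le] at this
        linarith
      · have hpc : a * (p.1 : ℝ) + b * (p.2 : ℝ) ≤ c := by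
          rw [hopen] at hp
          simpa [toR2] using not_lt.mp hp
        rcases F.eq_empty_or_nonempty with hFe | hFne
        · exact ⟨1, one_pos, by simp [hFe]⟩
        · set g : Z2 → ℝ := fun w => a * (w.1 : ℝ) + b * (w.2 : ℝ) with hg
          refine ⟨F.inf' hFne g - (a * (p.1 : ℝ) + b * (p.2 : ℝ)), ?_, fun w hw => ?_⟩
          · obtain ⟨w₀, hw₀, he⟩ := Finset.exists_mem_eq_inf' hFne g
            have := hFS w₀ hw₀
            rw [hopen] at this
            simp only [Set.mem_setOf_eq, toR2] at this
            rw [he, hg]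
            simp only []
            linarith
          · have := Finset.inf'_le g hw
            rw [hg] at this
            simp only [] at this
            linarith
    obtain ⟨γ, hγ, hF⟩ := hγex
    have hbase : ∀ q : Z2, c < a * (q.1 : ℝ) + b * (q.2 : ℝ) → toR2 q ∈ H := by
      intro q hq
      rcases hHcase with hclosed | hopen
      · rw [hclosed]; simpa [toR2] using le_of_lt hq
      · rw [hopen]; simpa [toR2] using hq
    intro x hx x' hx' hagree q _
    exact key_lemma X hX.2 a b c γ hγ F p hF hFcode x hx x' hx'
      (fun q hq => hagree q (hbase q hq)) q
  constructor
  · by_cases h : Codes X H Set.univ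
    · exact Or.inl h
    · exact Or.inr fun p hp hc => h (M ⟨p, hp, hc⟩)
  · rintro ⟨S, hS, p, hp, hc⟩
    refine M ⟨p, hp, ?_⟩
    intro x hx x' hx' hagr
    exact hc x hx x' hx' fun w hw => hagr w (hS hw)

end PolygonalShifts
end

section
/- Let X be a ℤ²-subshift, let L be a line in ℝ², and let H and H' be the two closed half planes whose common boundary is L (so H ∪ H' = ℝ²). If H X-codes all of ℝ², then there exists r > 0 such that the closed strip N_r(H) = {u ∈ H : dist(u, L) ≤ r} X-codes all of H'. -/
namespace PolygonalShifts

/-- Euclidean distance from `u` to the line `{w : a w₁ + b w₂ = c}`. -/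
noncomputable def distLine (a b c : ℝ) (u : ℝ × ℝ) : ℝ :=
  |a * u.1 + b * u.2 - c| / Real.sqrt (a ^ 2 + b ^ 2)

/-- Compactness: if `S` X-codes a point `p`, then some finite subset of `S` already
X-codes `p`. -/
lemma exists_finset_codes {A : Type} [Fintype A] {X : Set (Config A)}
    (hX : IsSubshift X) (S : Set Z2) (p : Z2) (h : CodesZ X S {p}) :
    ∃ F : Finset Z2, ↑F ⊆ S ∧ CodesZ X (↑F : Set Z2) {p} := by
  classical
  letI : TopologicalSpace A := ⊥
  haveI : DiscreteTopology A := ⟨rfl⟩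
  by_contra hcon
  push_neg at hcon
  set t : Finset Z2 → Set (Config A × Config A) := fun F =>
    ({z | z.1 ∈ X} ∩ {z | z.2 ∈ X} ∩ {z | z.1 p ≠ z.2 p}) ∩
      ⋂ f ∈ F, {z | f ∈ S → z.1 f = z.2 f} with ht
  have hne : ∀ F, (t F).Nonempty := by
    intro F
    have hsub : ↑(F.filter (fun f => f ∈ S)) ⊆ S := by
      intro f hf
      exact (Finset.mem_filter.mp (Finset.mem_coe.mp hf)).2
    have hnc := hcon (F.filter (fun f => f ∈ S)) hsub
    rw [CodesZ] at hnc
    push_neg at hnc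
    obtain ⟨x, hx, x', hx', hagree, p', hp', hnep⟩ := hnc
    rw [Set.mem_singleton_iff] at hp'
    subst hp'
    refine ⟨(x, x'), ⟨⟨⟨hx, hx'⟩, hnep⟩, ?_⟩⟩
    simp only [Set.mem_iInter]
    intro f hf hfS
    exact hagree f (Finset.mem_coe.mpr (Finset.mem_filter.mpr ⟨hf, hfS⟩))
  have hdir : Directed (· ⊇ ·) t := by
    intro F G
    refine ⟨F ∪ G, ?_, ?_⟩ <;>
    · intro z hz
      obtain ⟨h123, h4⟩ := hz
      refine ⟨h123, ?_⟩
      simp only [Set.mem_iInter] at h4 ⊢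
      intro f hf hfS
      exact h4 f (by simp [Finset.mem_union, hf]) hfS
  have heqc : ∀ f : Z2, IsClosed {z : Config A × Config A | z.1 f = z.2 f} := by
    intro f
    have hc : Continuous fun z : Config A × Config A => (z.1 f, z.2 f) :=
      ((continuous_apply f).comp continuous_fst).prodMk
        ((continuous_apply f).comp continuous_snd)
    exact (isClosed_discrete {w : A × A | w.1 = w.2}).preimage hc
  have hclosed : ∀ F, IsClosed (t F) := by
    intro F
    have hXc : IsClosed X := hX.1
    refine IsClosed.inter (IsClosed.inter (IsClosed.inter ?_ ?_) ?_) ?_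
    · exact hXc.preimage continuous_fst
    · exact hXc.preimage continuous_snd
    · have hc : Continuous fun z : Config A × Config A => (z.1 p, z.2 p) :=
        ((continuous_apply p).comp continuous_fst).prodMk
          ((continuous_apply p).comp continuous_snd)
      exact (isClosed_discrete {w : A × A | w.1 ≠ w.2}).preimage hc
    · refine isClosed_biInter fun f _ => ?_
      by_cases hfS : f ∈ S
      · have he : {z : Config A × Config A | f ∈ S → z.1 f = z.2 f}
            = {z | z.1 f = z.2 f} := by
          ext z; simp [hfS]
        rw [he]; exact heqc f
      · have he : {z : Config A × Config A | f ∈ S → z.1 f = z.2 f} = Set.univ := by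
          ext z; simp [hfS]
        rw [he]; exact isClosed_univ
  have hcomp : ∀ F, IsCompact (t F) := fun F => (hclosed F).isCompact
  obtain ⟨z, hz⟩ :=
    IsCompact.nonempty_iInter_of_directed_nonempty_isCompact_isClosed t hdir hne hcomp hclosed
  simp only [Set.mem_iInter] at hz
  obtain ⟨⟨⟨hx, hx'⟩, hnep⟩, -⟩ := hz ∅
  apply hnep
  refine h z.1 hx z.2 hx' ?_ p rfl
  intro f hfS
  obtain ⟨-, h4⟩ := hz {f}
  simp only [Set.mem_iInter] at h4
  exact h4 f (Finset.mem_singleton_self f) hfS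

/-- if the closed half plane `H = {φ ≥ c}` X-codes all of `ℝ²`, then
some closed strip `N_r(H) = {u ∈ H : dist(u, L) ≤ r}` X-codes the opposite closed
half plane `H' = {φ ≤ c}`. -/
theorem statement2 {A : Type} [Fintype A] [Nonempty A] (X : Set (Config A))
    (hX : IsSubshift X) (a b c : ℝ) (hab : (a, b) ≠ (0, 0))
    (hH : Codes X {w : ℝ × ℝ | a * w.1 + b * w.2 ≥ c} Set.univ) :
    ∃ r > (0 : ℝ), Codes X
      {u : ℝ × ℝ | a * u.1 + b * u.2 ≥ c ∧ distLine a b c u ≤ r}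
      {w : ℝ × ℝ | a * w.1 + b * w.2 ≤ c} := by
  classical
  set φ : Z2 → ℝ := fun p => a * p.1 + b * p.2 with hφ
  have hadd : ∀ u w : Z2, φ (u + w) = φ u + φ w := by
    intro u w
    simp only [hφ, Prod.fst_add, Prod.snd_add]
    push_cast
    ring
  have hab' : a ≠ 0 ∨ b ≠ 0 := by
    by_contra hc
    push_neg at hc
    exact hab (by rw [hc.1, hc.2])
  obtain ⟨q, hq⟩ : ∃ q : Z2, φ q < c := by
    rcases hab' with h | h
    · obtain ⟨k, hk⟩ := exists_nat_gt (|c| / |a|)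
      have ha : 0 < |a| := abs_pos.mpr h
      have hk' : |c| < k * |a| := (div_lt_iff₀ ha).mp hk
      by_cases hsa : 0 < a
      · refine ⟨(-(k : ℤ), 0), ?_⟩
        have hv : φ (-(k : ℤ), 0) = -((k : ℝ) * |a|) := by
          simp only [hφ, abs_of_pos hsa]
          push_cast
          ring
        rw [hv]
        have := neg_abs_le c
        linarith
      · have hsa' : a < 0 := lt_of_le_of_ne (not_lt.mp hsa) h
        refine ⟨((k : ℤ), 0), ?_⟩
        have hv : φ ((k : ℤ), 0) = -((k : ℝ) * |a|) := by
          simp only [hφ, abs_of_neg hsa']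
          push_cast
          ring
        rw [hv]
        have := neg_abs_le c
        linarith
    · obtain ⟨k, hk⟩ := exists_nat_gt (|c| / |b|)
      have hb : 0 < |b| := abs_pos.mpr h
      have hk' : |c| < k * |b| := (div_lt_iff₀ hb).mp hk
      by_cases hsb : 0 < b
      · refine ⟨(0, -(k : ℤ)), ?_⟩
        have hv : φ (0, -(k : ℤ)) = -((k : ℝ) * |b|) := by
          simp only [hφ, abs_of_pos hsb]
          push_cast
          ring
        rw [hv]
        have := neg_abs_le c
        linarith
      · have hsb' : b < 0 := lt_of_le_of_ne (not_lt.mp hsb) h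
        refine ⟨(0, (k : ℤ)), ?_⟩
        have hv : φ (0, (k : ℤ)) = -((k : ℝ) * |b|) := by
          simp only [hφ, abs_of_neg hsb']
          push_cast
          ring
        rw [hv]
        have := neg_abs_le c
        linarith
  set δ : ℝ := c - φ q with hδdef
  have hδ : 0 < δ := by simp only [hδdef]; linarith
  have hSq : CodesZ X {w : Z2 | c ≤ φ w} {q} := by
    intro x hx x' hx' hag p hp
    rw [Set.mem_singleton_iff] at hp
    subst hp
    exact hH x hx x' hx' (fun w hw => hag w hw) p (Set.mem_univ _)
  obtain ⟨F, hFS, hF⟩ := exists_finset_codes hX _ q hSq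
  set ρ : ℝ := ∑ f ∈ F, |φ f - c| with hρdef
  have hρ0 : 0 ≤ ρ := Finset.sum_nonneg fun _ _ => abs_nonneg _
  have hρf : ∀ f ∈ F, φ f ≤ c + ρ := by
    intro f hf
    have h1 : |φ f - c| ≤ ρ :=
      Finset.single_le_sum (f := fun f => |φ f - c|) (fun i _ => abs_nonneg _) hf
    have h2 : φ f - c ≤ |φ f - c| := le_abs_self _
    linarith
  have key : ∀ n : ℕ, ∀ x ∈ X, ∀ x' ∈ X,
      (∀ w : Z2, c ≤ φ w → φ w ≤ c + ρ + δ → x w = x' w) →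
      ∀ w : Z2, c - n * δ ≤ φ w → φ w ≤ c + ρ + δ → x w = x' w := by
    intro n
    induction n with
    | zero =>
      intro x hx x' hx' hbase w h1 h2
      exact hbase w (by simpa using h1) h2
    | succ n ih =>
      intro x hx x' hx' hbase w h1 h2
      by_cases hcase : c - n * δ ≤ φ w
      · exact ih x hx x' hx' hbase w hcase h2
      · push_neg at hcase
        push_cast at h1
        set u : Z2 := w - q with hu
        have huw : u + q = w := by simp [hu]
        have hφu : φ u = φ w - φ q := by
          have h := hadd u q
          rw [huw] at h
          linarith
        have hnδ : 0 ≤ (n : ℝ) * δ := mul_nonneg (Nat.cast_nonneg n) hδ.le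
        have hagF : ∀ f ∈ (↑F : Set Z2), shiftAct u x f = shiftAct u x' f := by
          intro f hf
          have hfc : c ≤ φ f := hFS hf
          have hfr : φ f ≤ c + ρ := hρf f (Finset.mem_coe.mp hf)
          have e : φ (u + f) = φ w - φ q + φ f := by rw [hadd, hφu]
          have hqδ : φ q = c - δ := by simp only [hδdef]; ring
          have hl : c - n * δ ≤ φ (u + f) := by rw [e, hqδ]; linarith
          have hr : φ (u + f) ≤ c + ρ + δ := by rw [e, hqδ]; linarith
          exact ih x hx x' hx' hbase (u + f) hl hr
        have hres := hF (shiftAct u x) (hX.2 u x hx) (shiftAct u x') (hX.2 u x' hx')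
          hagF q rfl
        simpa [shiftAct, huw] using hres
  have hs : 0 < Real.sqrt (a ^ 2 + b ^ 2) :=
    Real.sqrt_pos.mpr (by rcases hab' with h | h <;> positivity)
  refine ⟨(ρ + δ) / Real.sqrt (a ^ 2 + b ^ 2), div_pos (by linarith) hs, ?_⟩
  intro x hx x' hx' hag p hp
  have hbase : ∀ w : Z2, c ≤ φ w → φ w ≤ c + ρ + δ → x w = x' w := by
    intro w h1 h2
    refine hag w ⟨h1, ?_⟩
    show distLine a b c (toR2 w) ≤ _
    rw [distLine]
    have habs : |a * (toR2 w).1 + b * (toR2 w).2 - c| = φ w - c := by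
      rw [abs_of_nonneg]
      · rfl
      · have : c ≤ φ w := h1
        simp only [hφ] at this
        simpa [toR2] using sub_nonneg.mpr this
    rw [habs]
    gcongr
    linarith
  have hp' : φ p ≤ c := hp
  obtain ⟨n, hn⟩ : ∃ n : ℕ, c - n * δ ≤ φ p := by
    obtain ⟨n, hn⟩ := exists_nat_gt ((c - φ p) / δ)
    refine ⟨n, ?_⟩
    rw [div_lt_iff₀ hδ] at hn
    linarith
  exact key n x hx x' hx' hbase p hn (by linarith)

end PolygonalShifts
end

section
/- Let X be a ℤ²-subshift and let P be a coding polygon for X. If ℓ is a nonexpansive ray for X, then ℓ is positively parallel to an oriented edge of P (that is, a translate of that edge lies in ℓ with matching orientation). -/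
namespace PolygonalShifts

section AuxStatement3

lemma toR2_injective : Function.Injective toR2 := by
  intro p q h
  have h1 : (p.1 : ℝ) = q.1 := congrArg Prod.fst h
  have h2 : (p.2 : ℝ) = q.2 := congrArg Prod.snd h
  exact Prod.ext (by exact_mod_cast h1) (by exact_mod_cast h2)

lemma crossZ_swap (a b : Z2) : crossZ a b = -crossZ b a := by
  simp only [crossZ]; ring

lemma crossZ_neg_right (a b : Z2) : crossZ a (-b) = crossZ b a := by
  simp only [crossZ, Prod.fst_neg, Prod.snd_neg]; ring

lemma crossRZ_sub (v : ℝ × ℝ) (a b : Z2) :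
    crossR v (toR2 (a - b)) = crossR v (toR2 a) - crossR v (toR2 b) := by
  simp only [crossR, toR2, Prod.fst_sub, Prod.snd_sub]
  push_cast; ring

lemma crossRZ_neg (v : ℝ × ℝ) (a : Z2) :
    crossR v (toR2 (-a)) = -crossR v (toR2 a) := by
  simp only [crossR, toR2, Prod.fst_neg, Prod.snd_neg]
  push_cast; ring

lemma diff_eq (v : ℝ × ℝ) (t : ℝ) (w a b : Z2) (htv : v = t • toR2 w) :
    crossR v (toR2 a) - crossR v (toR2 b) = t * (crossZ w (a - b) : ℝ) := by
  subst htv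
  simp only [crossR, crossZ, toR2, Prod.smul_fst, Prod.smul_snd, smul_eq_mul,
    Prod.fst_sub, Prod.snd_sub]
  push_cast; ring

lemma exists_smul_of_crossR_eq_zero {v w : ℝ × ℝ} (hv : v ≠ 0) (hw : w ≠ 0)
    (h : crossR v w = 0) : ∃ t : ℝ, t ≠ 0 ∧ v = t • w := by
  have key : v.1 * w.2 = v.2 * w.1 := by simp only [crossR] at h; linarith
  by_cases hw1 : w.1 = 0
  · have hw2 : w.2 ≠ 0 := fun hw2 => hw (Prod.ext hw1 hw2)
    have hv1 : v.1 = 0 := by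
      have h0 : v.1 * w.2 = 0 := by rw [key, hw1, mul_zero]
      exact (mul_eq_zero.mp h0).resolve_right hw2
    refine ⟨v.2 / w.2, fun ht => ?_, ?_⟩
    · apply hv
      have hv2 : v.2 = 0 := by field_simp at ht; simpa using ht
      exact Prod.ext hv1 hv2
    · apply Prod.ext
      · simp only [Prod.smul_fst, smul_eq_mul, hw1, mul_zero, hv1]
      · simp only [Prod.smul_snd, smul_eq_mul]
        field_simp
  · refine ⟨v.1 / w.1, fun ht => ?_, ?_⟩
    · apply hv
      have hv1 : v.1 = 0 := by field_simp at ht; simpa using ht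
      have hv2 : v.2 = 0 := by
        have h0 : v.2 * w.1 = 0 := by rw [← key, hv1, zero_mul]
        exact (mul_eq_zero.mp h0).resolve_right hw1
      exact Prod.ext hv1 hv2
    · apply Prod.ext
      · simp only [Prod.smul_fst, smul_eq_mul]
        field_simp
      · simp only [Prod.smul_snd, smul_eq_mul]
        field_simp
        linarith [key]

lemma fin_one_ne_zero' (m : ℕ) : (1 : Fin (m + 3)) ≠ 0 := by simp [Fin.ext_iff]

lemma fin_two_ne_zero' (m : ℕ) : (2 : Fin (m + 3)) ≠ 0 := by
  simp [Fin.ext_iff, Fin.val_two]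
  rw [Nat.mod_eq_of_lt (by omega)]
  omega

lemma fin_add_ne (m : ℕ) (i k : Fin (m + 3)) (hk : k ≠ 0) : i + k ≠ i := by
  intro h
  apply hk
  simpa using congrArg (fun z => z - i) h

lemma fin_add_two_ne_add_one (m : ℕ) (i : Fin (m + 3)) : i + 2 ≠ i + 1 := by
  have h2 : i + 2 = (i + 1) + 1 := Fin.ext (by simp only [Fin.val_add, Fin.val_one, Fin.val_two, Nat.mod_add_mod, add_assoc]; rw [Nat.mod_eq_of_lt (show 1 + 1 < m + 3 by omega)])
  rw [h2]
  exact fin_add_ne _ _ _ (fin_one_ne_zero' m)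

lemma exists_strict_min_vertex (P : IntPolygon) (v : ℝ × ℝ) (hv : v ≠ 0)
    (h : ∀ i, ¬ SameRay ℝ (toR2 (P.edgeVec i)) v) :
    ∃ i : Fin (P.n + 3), ∀ j, j ≠ i →
      crossR v (toR2 (P.vert i)) < crossR v (toR2 (P.vert j)) := by
  obtain ⟨i, -, hmin⟩ := Finset.exists_min_image Finset.univ
    (fun j => crossR v (toR2 (P.vert j))) ⟨0, Finset.mem_univ 0⟩
  refine ⟨i, fun j hj => ?_⟩
  rcases lt_or_ge (crossR v (toR2 (P.vert i))) (crossR v (toR2 (P.vert j))) with hlt | hle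
  · exact hlt
  exfalso
  have heq : crossR v (toR2 (P.vert j)) = crossR v (toR2 (P.vert i)) :=
    le_antisymm hle (hmin j (Finset.mem_univ j))
  have key : ∀ k : Fin (P.n + 3),
      crossR v (toR2 (P.vert k)) = crossR v (toR2 (P.vert i)) →
      crossR v (toR2 (P.vert (k + 1) - P.vert k)) = 0 → False := by
    intro k hk hpar
    have hc2 : 0 < crossZ (P.vert (k + 1) - P.vert k) (P.vert (k + 2) - P.vert k) :=
      P.convex k (k + 2) (fin_add_ne _ _ _ (fin_two_ne_zero' _)) (fin_add_two_ne_add_one _ _)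
    have hwne : toR2 (P.vert (k + 1) - P.vert k) ≠ 0 := by
      intro h0
      have h0' : P.vert (k + 1) - P.vert k = 0 := toR2_injective (by simpa [toR2] using h0)
      rw [h0'] at hc2
      simp [crossZ] at hc2
    obtain ⟨t, ht0, htv⟩ := exists_smul_of_crossR_eq_zero hv hwne hpar
    have hd := diff_eq v t _ (P.vert (k + 2)) (P.vert k) htv
    have hge : 0 ≤ crossR v (toR2 (P.vert (k + 2))) - crossR v (toR2 (P.vert k)) := by
      have h2 := hmin (k + 2) (Finset.mem_univ _)
      linarith
    have hcpos : (0 : ℝ) < (crossZ (P.vert (k + 1) - P.vert k) (P.vert (k + 2) - P.vert k) : ℝ) := by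
      exact_mod_cast hc2
    have ht : 0 < t := by
      rcases ht0.lt_or_gt with htneg | htpos
      · exfalso
        have hlt := mul_neg_of_neg_of_pos htneg hcpos
        rw [hd] at hge
        linarith
      · exact htpos
    apply h k
    rw [IntPolygon.edgeVec, htv]
    exact SameRay.sameRay_nonneg_smul_right _ ht.le
  have hcw : crossR v (toR2 (P.vert j - P.vert i)) = 0 := by
    rw [crossRZ_sub]; linarith
  rcases eq_or_ne j (i + 1) with rfl | hji1
  · exact key i rfl hcw
  rcases eq_or_ne i (j + 1) with hij1 | hij1
  · apply key j heq
    have hsw : P.vert (j + 1) - P.vert j = -(P.vert j - P.vert i) := by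
      rw [← hij1]; exact (neg_sub _ _).symm
    rw [hsw, crossRZ_neg, hcw, neg_zero]
  · have ha : 0 < crossZ (P.vert (i + 1) - P.vert i) (P.vert j - P.vert i) :=
      P.convex i j hj hji1
    have hwne : toR2 (P.vert j - P.vert i) ≠ 0 := by
      intro h0
      have h0' : P.vert j - P.vert i = 0 := toR2_injective (by simpa [toR2] using h0)
      rw [h0'] at ha
      simp [crossZ] at ha
    obtain ⟨t, ht0, htv⟩ := exists_smul_of_crossR_eq_zero hv hwne hcw
    have hb : 0 < crossZ (P.vert (j + 1) - P.vert j) (P.vert i - P.vert j) :=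
      P.convex j i (Ne.symm hj) hij1
    have h1 := diff_eq v t _ (P.vert (i + 1)) (P.vert i) htv
    have h2 := diff_eq v t _ (P.vert (j + 1)) (P.vert j) htv
    have hge1 : 0 ≤ crossR v (toR2 (P.vert (i + 1))) - crossR v (toR2 (P.vert i)) := by
      have := hmin (i + 1) (Finset.mem_univ _); linarith
    have hge2 : 0 ≤ crossR v (toR2 (P.vert (j + 1))) - crossR v (toR2 (P.vert j)) := by
      have := hmin (j + 1) (Finset.mem_univ _); linarith
    have hsb : 0 < crossZ (P.vert j - P.vert i) (P.vert (j + 1) - P.vert j) := by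
      have e : P.vert i - P.vert j = -(P.vert j - P.vert i) := (neg_sub _ _).symm
      rw [e, crossZ_neg_right] at hb
      exact hb
    have hsa : crossZ (P.vert j - P.vert i) (P.vert (i + 1) - P.vert i)
        = -crossZ (P.vert (i + 1) - P.vert i) (P.vert j - P.vert i) := crossZ_swap _ _
    have hA : (0 : ℝ) < (crossZ (P.vert (i + 1) - P.vert i) (P.vert j - P.vert i) : ℝ) := by
      exact_mod_cast ha
    have hB : (0 : ℝ) < (crossZ (P.vert j - P.vert i) (P.vert (j + 1) - P.vert j) : ℝ) := by
      exact_mod_cast hsb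
    rw [h1] at hge1
    rw [h2] at hge2
    have hc1 : (crossZ (P.vert j - P.vert i) (P.vert (i + 1) - P.vert i) : ℝ)
        = -((crossZ (P.vert (i + 1) - P.vert i) (P.vert j - P.vert i) : ℝ)) := by
      exact_mod_cast congrArg (Int.cast : ℤ → ℝ) hsa
    rw [hc1] at hge1
    have ht1 : t ≤ 0 := by
      by_contra hh
      push_neg at hh
      nlinarith
    have ht2 : 0 ≤ t := by
      by_contra hh
      push_neg at hh
      nlinarith
    exact ht0 (le_antisymm ht1 ht2)

end AuxStatement3

/-- a nonexpansive ray for `X` is positively parallel to an oriented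
edge of any coding polygon `P` for `X`. -/
theorem statement3 {A : Type} [Fintype A] [Nonempty A] (X : Set (Config A))
    (hX : IsSubshift X) (P : IntPolygon) (hP : IsCodingPolygon X P)
    (v : ℝ × ℝ) (hv : v ≠ 0) (hne : ¬ ExpansiveRay X v) :
    ∃ i : Fin (P.n + 3), SameRay ℝ (toR2 (P.edgeVec i)) v := by
  classical
  by_contra hcon
  push_neg at hcon
  apply hne
  have hcon' : ∀ i, ¬ SameRay ℝ (toR2 (P.edgeVec i)) v := hcon
  obtain ⟨i, hi⟩ := exists_strict_min_vertex P v hv hcon'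
  -- every lattice point of the carrier other than the vertex `i` is strictly above it
  have hcarrier : ∀ q : Z2, toR2 q ∈ P.carrier → q ≠ P.vert i →
      crossR v (toR2 (P.vert i)) < crossR v (toR2 q) := by
    intro q hq hqne
    have hsub : P.carrier ⊆
        {w : ℝ × ℝ | crossR v (toR2 (P.vert i)) < crossR v w} ∪ {toR2 (P.vert i)} := by
      apply convexHull_min
      · rintro _ ⟨j, rfl⟩
        by_cases hji : j = i
        · right; rw [hji]; rfl
        · left; exact hi j hji
      · intro p hp q' hq' a b ha hb hab
        have hcombo : crossR v (a • p + b • q') = a * crossR v p + b * crossR v q' := by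
          simp only [crossR, Prod.fst_add, Prod.snd_add, Prod.smul_fst, Prod.smul_snd,
            smul_eq_mul]
          ring
        rcases hp with hp | hp <;> rcases hq' with hq' | hq'
        · left
          simp only [Set.mem_setOf_eq] at hp hq' ⊢
          rw [hcombo]
          by_cases ha0 : a = 0
          · have hb1 : b = 1 := by rw [ha0] at hab; linarith
            rw [ha0, hb1]; linarith
          · have ha' : 0 < a := lt_of_le_of_ne ha (Ne.symm ha0)
            have hc' : a * crossR v (toR2 (P.vert i)) + b * crossR v (toR2 (P.vert i))
                = crossR v (toR2 (P.vert i)) := by rw [← add_mul, hab, one_mul]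
            linarith [mul_pos ha' (sub_pos.mpr hp), mul_nonneg hb (le_of_lt (sub_pos.mpr hq'))]
        · simp only [Set.mem_singleton_iff] at hq'
          by_cases ha0 : a = 0
          · right
            have hb1 : b = 1 := by rw [ha0] at hab; linarith
            simp [ha0, hb1, hq']
          · left
            have ha' : 0 < a := lt_of_le_of_ne ha (Ne.symm ha0)
            simp only [Set.mem_setOf_eq] at hp ⊢
            rw [hcombo, hq']
            have hc' : a * crossR v (toR2 (P.vert i)) + b * crossR v (toR2 (P.vert i))
                = crossR v (toR2 (P.vert i)) := by rw [← add_mul, hab, one_mul]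
            linarith [mul_pos ha' (sub_pos.mpr hp)]
        · simp only [Set.mem_singleton_iff] at hp
          by_cases hb0 : b = 0
          · right
            have ha1 : a = 1 := by rw [hb0] at hab; linarith
            simp [hb0, ha1, hp]
          · left
            have hb' : 0 < b := lt_of_le_of_ne hb (Ne.symm hb0)
            simp only [Set.mem_setOf_eq] at hq' ⊢
            rw [hcombo, hp]
            have hc' : a * crossR v (toR2 (P.vert i)) + b * crossR v (toR2 (P.vert i))
                = crossR v (toR2 (P.vert i)) := by rw [← add_mul, hab, one_mul]
            linarith [mul_pos hb' (sub_pos.mpr hq')]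
        · right
          simp only [Set.mem_singleton_iff] at hp hq' ⊢
          rw [hp, hq', ← add_smul, hab, one_smul]
    rcases hsub hq with h | h
    · exact h
    · exact absurd (toR2_injective h) hqne
  -- a uniform positive gap `δ` over the (finitely many) lattice points of the carrier
  obtain ⟨R, hR⟩ :=
    ((Set.finite_range fun j => toR2 (P.vert j)).isCompact_convexHull (𝕜 := ℝ)).isBounded.subset_closedBall 0
  set N : ℤ := ⌈R⌉ with hN
  have hmemS : ∀ q : Z2, toR2 q ∈ P.carrier →
      q ∈ (Finset.Icc (-N) N ×ˢ Finset.Icc (-N) N : Finset Z2) := by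
    intro q hq
    have h1 := hR hq
    rw [Metric.mem_closedBall, dist_zero_right] at h1
    have hf : |(q.1 : ℝ)| ≤ R := by
      have := (norm_fst_le (toR2 q)).trans h1
      simpa [toR2, Real.norm_eq_abs] using this
    have hs : |(q.2 : ℝ)| ≤ R := by
      have := (norm_snd_le (toR2 q)).trans h1
      simpa [toR2, Real.norm_eq_abs] using this
    have hRN : R ≤ (N : ℝ) := Int.le_ceil R
    rw [abs_le] at hf hs
    refine Finset.mem_product.mpr ⟨Finset.mem_Icc.mpr ⟨?_, ?_⟩, Finset.mem_Icc.mpr ⟨?_, ?_⟩⟩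
    · have : (-(N : ℝ)) ≤ (q.1 : ℝ) := by linarith [hf.1]
      exact_mod_cast this
    · have : (q.1 : ℝ) ≤ (N : ℝ) := by linarith [hf.2]
      exact_mod_cast this
    · have : (-(N : ℝ)) ≤ (q.2 : ℝ) := by linarith [hs.1]
      exact_mod_cast this
    · have : (q.2 : ℝ) ≤ (N : ℝ) := by linarith [hs.2]
      exact_mod_cast this
  set T : Finset Z2 :=
    (((Finset.Icc (-N) N ×ˢ Finset.Icc (-N) N : Finset Z2)).filter
      (fun q => toR2 q ∈ P.carrier)).erase (P.vert i) with hT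
  have hvertmem : ∀ j, toR2 (P.vert j) ∈ P.carrier :=
    fun j => subset_convexHull ℝ _ ⟨j, rfl⟩
  have hne1 : P.vert (i + 1) ≠ P.vert i := by
    intro hEq
    have h' := hi (i + 1) (fin_add_ne _ _ _ (fin_one_ne_zero' _))
    rw [hEq] at h'
    exact lt_irrefl _ h'
  have hTne : T.Nonempty :=
    ⟨P.vert (i + 1), Finset.mem_erase.mpr ⟨hne1, Finset.mem_filter.mpr
      ⟨hmemS _ (hvertmem _), hvertmem _⟩⟩⟩
  set δ : ℝ := T.inf' hTne (fun q => crossR v (toR2 q) - crossR v (toR2 (P.vert i))) with hδdef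
  have hδ : 0 < δ := by
    rw [hδdef]
    refine (Finset.lt_inf'_iff hTne).mpr (fun q hqT => ?_)
    have hq1 := Finset.mem_erase.mp hqT
    have hq2 := (Finset.mem_filter.mp hq1.2).2
    have := hcarrier q hq2 hq1.1
    linarith
  have hδle : ∀ q : Z2, toR2 q ∈ P.carrier → q ≠ P.vert i →
      crossR v (toR2 (P.vert i)) + δ ≤ crossR v (toR2 q) := by
    intro q hq hqne
    have hmem : q ∈ T := Finset.mem_erase.mpr ⟨hqne, Finset.mem_filter.mpr ⟨hmemS q hq, hq⟩⟩
    have := Finset.inf'_le (fun q => crossR v (toR2 q) - crossR v (toR2 (P.vert i))) hmem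
    rw [hδdef]
    linarith
  -- the coding argument
  intro x hx x' hx' hagree p _
  have claim : ∀ n : ℕ, ∀ r : Z2, -(n : ℝ) * δ ≤ crossR v (toR2 r) → x r = x' r := by
    intro n
    induction n with
    | zero =>
      intro r hr
      apply hagree
      simp only [leftHalfPlane, Set.mem_setOf_eq]
      simp only [Nat.cast_zero, neg_zero, zero_mul] at hr
      exact hr
    | succ n ih =>
      intro r hr
      by_cases h0 : -(n : ℝ) * δ ≤ crossR v (toR2 r)
      · exact ih r h0
      · have hxu := hX.2 (r - P.vert i) x hx
        have hx'u := hX.2 (r - P.vert i) x' hx'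
        have hpre : ∀ q : Z2, toR2 q ∈ P.carrier \ {toR2 (P.vert i)} →
            shiftAct (r - P.vert i) x q = shiftAct (r - P.vert i) x' q := by
          intro q hq
          have hqc := hq.1
          have hqne : q ≠ P.vert i := fun hh => hq.2 (by rw [hh]; rfl)
          show x (r - P.vert i + q) = x' (r - P.vert i + q)
          apply ih
          have hadd : crossR v (toR2 (r - P.vert i + q)) =
              crossR v (toR2 r) - crossR v (toR2 (P.vert i)) + crossR v (toR2 q) := by
            simp only [crossR, toR2, Prod.fst_add, Prod.snd_add, Prod.fst_sub, Prod.snd_sub]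
            push_cast; ring
          have hge := hδle q hqc hqne
          rw [hadd]
          push_cast at hr
          linarith
        have hcode := hP i (shiftAct (r - P.vert i) x) hxu (shiftAct (r - P.vert i) x') hx'u
          hpre (P.vert i) rfl
        have hsum : r - P.vert i + P.vert i = r := by ring
        simpa [shiftAct, hsum] using hcode
  obtain ⟨n, hn⟩ := exists_nat_ge ((-(crossR v (toR2 p))) / δ)
  apply claim n p
  rw [div_le_iff₀ hδ] at hn
  linarith

end PolygonalShifts
end

section
/- Let X be a ℤ²-subshift that is polygonal with coding polygon P, and let ℓ be a nonexpansive ray for X that is positively parallel to an oriented edge of P. Then ℓ is closing for X. -/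
namespace PolygonalShifts

section Statement6Aux

lemma toR2_add (p q : Z2) : toR2 (p + q) = toR2 p + toR2 q := by
  simp [toR2, Prod.ext_iff]

lemma toR2_sub (p q : Z2) : toR2 (p - q) = toR2 p - toR2 q := by
  simp [toR2, Prod.ext_iff]

lemma toR2_smul (k : ℤ) (p : Z2) : toR2 (k • p) = (k : ℝ) • toR2 p := by
  simp [toR2, Prod.ext_iff]

lemma toR2_inj {p q : Z2} (h : toR2 p = toR2 q) : p = q := by
  simp [toR2, Prod.ext_iff] at h ⊢
  exact_mod_cast h

lemma crossR_toR2 (u w : Z2) : crossR (toR2 u) (toR2 w) = (crossZ u w : ℝ) := by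
  simp [crossR, crossZ, toR2]

lemma crossZ_sub_right (u a b : Z2) : crossZ u (a - b) = crossZ u a - crossZ u b := by
  simp [crossZ]; ring

lemma crossZ_add_right (u a b : Z2) : crossZ u (a + b) = crossZ u a + crossZ u b := by
  simp [crossZ]; ring

lemma crossZ_smul_right (u : Z2) (k : ℤ) (w : Z2) : crossZ u (k • w) = k * crossZ u w := by
  simp [crossZ]; ring

lemma crossZ_self (u : Z2) : crossZ u u = 0 := by simp [crossZ]; ring

lemma eq_smul_of_crossZ_eq_zero {v d : Z2} (h : Int.gcd v.1 v.2 = 1)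
    (hc : crossZ v d = 0) : ∃ k : ℤ, d = k • v := by
  have hab : v.1 * Int.gcdA v.1 v.2 + v.2 * Int.gcdB v.1 v.2 = 1 := by
    have := Int.gcd_eq_gcd_ab v.1 v.2
    rw [h] at this; exact_mod_cast this.symm
  set a := Int.gcdA v.1 v.2
  set b := Int.gcdB v.1 v.2
  refine ⟨a * d.1 + b * d.2, ?_⟩
  have hc' : v.1 * d.2 - v.2 * d.1 = 0 := hc
  have h1 : d.1 = (a * d.1 + b * d.2) * v.1 := by linear_combination -d.1 * hab - b * hc'
  have h2 : d.2 = (a * d.1 + b * d.2) * v.2 := by linear_combination -d.2 * hab + a * hc'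
  exact Prod.ext h1 h2

lemma codes_shift {A : Type*} {X : Set (Config A)} (hX : IsSubshift X)
    {S S' : Set (ℝ × ℝ)} (h : Codes X S S') (u : Z2) :
    Codes X ((toR2 u + ·) '' S) ((toR2 u + ·) '' S') := by
  intro x hx x' hx' hagree p hp
  obtain ⟨w, hw, hwp⟩ := hp
  have hwp' : toR2 u + w = toR2 p := hwp
  have hw' : toR2 (p - u) ∈ S' := by
    have hweq : w = toR2 (p - u) := by
      rw [toR2_sub, ← hwp']; rw [add_sub_cancel_left]
    rwa [← hweq]
  have hyp : ∀ q : Z2, toR2 q ∈ S → shiftAct u x q = shiftAct u x' q := by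
    intro q hq
    exact hagree (u + q) ⟨toR2 q, hq, (toR2_add u q).symm⟩
  have key := h (shiftAct u x) (hX.2 u x hx) (shiftAct u x') (hX.2 u x' hx') hyp (p - u) hw'
  have e : u + (p - u) = p := by abel
  simpa [shiftAct, e] using key

lemma carrier_left_of_edge (P : IntPolygon) (j : Fin (P.n + 3)) :
    ∀ w ∈ P.carrier, 0 ≤ crossR (toR2 (P.edgeVec j)) (w - toR2 (P.vert j)) := by
  intro w hw
  rw [IntPolygon.carrier] at hw
  set E := toR2 (P.edgeVec j) with hE
  have hlin : IsLinearMap ℝ (fun w : ℝ × ℝ => E.1 * w.2 - E.2 * w.1) := by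
    constructor
    · intro a b; simp; ring
    · intro c a; simp; ring
  have hconv : Convex ℝ {w : ℝ × ℝ | crossR E (toR2 (P.vert j)) ≤ E.1 * w.2 - E.2 * w.1} :=
    convex_halfSpace_ge hlin _
  have hsub : Set.range (fun i => toR2 (P.vert i)) ⊆
      {w : ℝ × ℝ | crossR E (toR2 (P.vert j)) ≤ E.1 * w.2 - E.2 * w.1} := by
    rintro _ ⟨k, rfl⟩
    show crossR E (toR2 (P.vert j)) ≤ E.1 * (toR2 (P.vert k)).2 - E.2 * (toR2 (P.vert k)).1
    have key : 0 ≤ crossR E (toR2 (P.vert k) - toR2 (P.vert j)) := by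
      rw [hE, ← toR2_sub, crossR_toR2]
      by_cases hk : k = j
      · subst hk; rw [sub_self]; norm_num [crossZ]
      · by_cases hk1 : k = j + 1
        · subst hk1
          have heq : P.vert (j + 1) - P.vert j = P.edgeVec j := rfl
          rw [heq, crossZ_self]; norm_num
        · have := P.convex j k hk hk1
          exact_mod_cast this.le
    have expand : E.1 * (toR2 (P.vert k)).2 - E.2 * (toR2 (P.vert k)).1 =
        crossR E (toR2 (P.vert k) - toR2 (P.vert j)) + crossR E (toR2 (P.vert j)) := by
      simp only [crossR, Prod.fst_sub, Prod.snd_sub]; ring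
    rw [expand]
    linarith [key]
  have hmem := convexHull_min hsub hconv hw
  have h3 : crossR E (toR2 (P.vert j)) ≤ E.1 * w.2 - E.2 * w.1 := hmem
  have expand2 : crossR E (w - toR2 (P.vert j)) =
      (E.1 * w.2 - E.2 * w.1) - crossR E (toR2 (P.vert j)) := by
    simp only [crossR, Prod.fst_sub, Prod.snd_sub]; ring
  rw [expand2]
  linarith [h3]

end Statement6Aux
/-- if `X` is polygonal with coding polygon `P` and the nonexpansive ray
directed by the primitive vector `v` is positively parallel to an oriented edge of `P`,
then this ray is closing for `X`. -/
theorem statement6 {A : Type} [Fintype A] [Nonempty A] (X : Set (Config A))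
    (hX : IsSubshift X) (P : IntPolygon) (hP : Polygonal X P)
    (v : Z2) (hprim : Int.gcd v.1 v.2 = 1)
    (hne : ¬ ExpansiveRay X (toR2 v))
    (hpar : ∃ i : Fin (P.n + 3), SameRay ℝ (toR2 (P.edgeVec i)) (toR2 v)) :
    ClosingRay X v := by
  clear hne
  obtain ⟨i, hsr⟩ := hpar
  -- Fin arithmetic facts
  have hval1 : (1 : Fin (P.n + 3)).val = 1 := by
    rw [Fin.val_one', Nat.mod_eq_of_lt (by omega)]
  have hval2 : (2 : Fin (P.n + 3)).val = 2 := by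
    show 2 % (P.n + 3) = 2
    exact Nat.mod_eq_of_lt (by omega)
  have h1 : (1 : Fin (P.n + 3)) ≠ 0 := by
    intro h; have := congrArg Fin.val h; rw [hval1] at this; simp at this
  have h2 : (2 : Fin (P.n + 3)) ≠ 0 := by
    intro h; have := congrArg Fin.val h; rw [hval2] at this; simp at this
  have h21 : (2 : Fin (P.n + 3)) ≠ 1 := by
    intro h; have := congrArg Fin.val h; rw [hval2, hval1] at this; simp at this
  have hvadd : ∀ a b : Fin (P.n + 3), a + b = a → b = 0 := by
    intro a b h
    have : a + b = a + 0 := by rw [add_zero]; exact h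
    exact add_left_cancel this
  have hne_add1 : ∀ j : Fin (P.n + 3), j ≠ j + 1 := by
    intro j h; exact h1 (hvadd j 1 h.symm)
  have hne_add2 : ∀ j : Fin (P.n + 3), j + 2 ≠ j := by
    intro j h; exact h2 (hvadd j 2 h)
  have haddadd : ∀ j : Fin (P.n + 3), j + 1 + 1 = j + 2 := by
    intro j; rw [add_assoc]; congr 1
  -- basic nonvanishing
  have toR2_zero : toR2 (0 : Z2) = 0 := by simp [toR2, Prod.ext_iff]
  have hv0 : v ≠ 0 := by
    intro h
    rw [h] at hprim
    simp at hprim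
  have hvne : toR2 v ≠ 0 := by
    intro h; apply hv0; apply toR2_inj; rw [h, toR2_zero]
  have hE0 : P.edgeVec i ≠ 0 := by
    intro h
    have hcnd : (i + 2 : Fin (P.n + 3)) ≠ i + 1 := by
      rw [← haddadd]
      intro hh
      exact h1 (hvadd (i + 1) 1 hh)
    have hc2 := P.convex i (i + 2) (hne_add2 i) hcnd
    have hEe : P.vert (i + 1) - P.vert i = P.edgeVec i := rfl
    rw [hEe, h] at hc2
    simp [crossZ] at hc2
  have hEne : toR2 (P.edgeVec i) ≠ 0 := by
    intro h; apply hE0; apply toR2_inj; rw [h, toR2_zero]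
  -- extract the positive integer multiple
  obtain ⟨r, s, hr, hs, hrs⟩ := hsr.exists_pos hEne hvne
  have hcrossR_smul : ∀ (t : ℝ) (u w : ℝ × ℝ), crossR u (t • w) = t * crossR u w := by
    intro t u w; simp [crossR]; ring
  have hcross0 : crossZ v (P.edgeVec i) = 0 := by
    have h' : crossR (toR2 v) (r • toR2 (P.edgeVec i)) = crossR (toR2 v) (s • toR2 v) := by
      rw [hrs]
    rw [hcrossR_smul, hcrossR_smul] at h'
    have hself : crossR (toR2 v) (toR2 v) = 0 := by simp [crossR]; ring
    rw [hself, mul_zero] at h'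
    have := mul_eq_zero.mp h'
    rcases this with h'' | h''
    · exact absurd h'' (ne_of_gt hr)
    · rw [crossR_toR2] at h''
      exact_mod_cast h''
  obtain ⟨c, hcEv⟩ := eq_smul_of_crossZ_eq_zero hprim hcross0
  have hc1 : 1 ≤ c := by
    have hre : toR2 (P.edgeVec i) = (c : ℝ) • toR2 v := by rw [hcEv, toR2_smul]
    rw [hre, smul_smul] at hrs
    have hcs : r * (c : ℝ) = s := by
      have hz0 : (r * (c : ℝ) - s) • toR2 v = 0 := by rw [sub_smul, hrs, sub_self]
      rcases smul_eq_zero.mp hz0 with h' | h'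
      · linarith
      · exact absurd h' hvne
    have hcpos : 0 < (c : ℝ) := by
      by_contra hcle
      push_neg at hcle
      have := mul_nonpos_of_nonneg_of_nonpos (le_of_lt hr) hcle
      linarith
    have : (0 : ℤ) < c := by exact_mod_cast hcpos
    omega
  -- cross sign of adjacent edges with v
  have crossZ_smul_left : ∀ (k : ℤ) (u w : Z2), crossZ (k • u) w = k * crossZ u w := by
    intro k u w; simp [crossZ]; ring
  have hEplus : crossZ (P.edgeVec (i + 1)) v < 0 := by
    have hc2 := P.convex (i + 1) i (hne_add1 i) (by
      rw [haddadd]; exact fun h => hne_add2 i h.symm)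
    have hfold : P.vert (i + 1 + 1) - P.vert (i + 1) = P.edgeVec (i + 1) := rfl
    have he : P.vert i - P.vert (i + 1) = (-c) • v := by
      have h' : P.vert i - P.vert (i + 1) = -(P.edgeVec i) := by
        show _ = -(P.vert (i+1) - P.vert i); abel
      rw [h', hcEv, neg_smul]
    rw [hfold, he, crossZ_smul_right] at hc2
    by_contra hge
    push_neg at hge
    have := mul_nonneg (by linarith : (0:ℤ) ≤ c) hge
    linarith
  have hEminus : 0 < crossZ (P.edgeVec (i - 1)) v := by
    have him : i - 1 + 1 = i := by rw [sub_add_cancel]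
    have hc2 := P.convex (i - 1) (i + 1)
      (by intro h
          have := congrArg (· + 1) h
          rw [him, haddadd] at this
          exact hne_add2 i this)
      (by rw [him]; exact (hne_add1 i).symm)
    have he : P.vert (i + 1) - P.vert (i - 1) = P.edgeVec (i - 1) + c • v := by
      have h' : P.edgeVec (i - 1) = P.vert i - P.vert (i - 1) := by
        show P.vert (i - 1 + 1) - P.vert (i - 1) = _
        rw [him]
      have h'' : P.vert (i + 1) - P.vert i = c • v := by
        show P.edgeVec i = _; exact hcEv
      rw [h', ← h'']; abel
    have hfold : P.vert (i - 1 + 1) - P.vert (i - 1) = P.edgeVec (i - 1) := rfl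
    rw [hfold, he, crossZ_add_right, crossZ_smul_right, crossZ_self, zero_add] at hc2
    by_contra hge
    push_neg at hge
    have := mul_nonpos_of_nonneg_of_nonpos (by linarith : (0:ℤ) ≤ c) hge
    linarith
  -- half-plane facts from the polygon
  have hcar : ∀ (j : Fin (P.n + 3)) (q : Z2), toR2 q ∈ P.carrier →
      0 ≤ crossZ (P.edgeVec j) (q - P.vert j) := by
    intro j q hq
    have := carrier_left_of_edge P j (toR2 q) hq
    rw [← toR2_sub, crossR_toR2] at this
    exact_mod_cast this
  have hHi : ∀ q : Z2, toR2 q ∈ P.carrier → 0 ≤ crossZ v (q - P.vert i) := by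
    intro q hq
    have h' := hcar i q hq
    rw [hcEv, crossZ_smul_left] at h'
    by_contra hge
    push_neg at hge
    have := mul_neg_of_pos_of_neg (by linarith : (0:ℤ) < c) hge
    linarith
  -- THE LEFT STEP
  have stepL : ∀ x ∈ X, ∀ x' ∈ X,
      (∀ q : Z2, 0 ≤ crossZ v q → x q = x' q) →
      ∀ p0 : Z2, crossZ v p0 = -1 →
      (∀ j : ℤ, 1 ≤ j → j ≤ c → x (p0 + j • v) = x' (p0 + j • v)) →
      x p0 = x' p0 := by
    intro x hx x' hx' hH p0 hp0 hB
    set u : Z2 := p0 - P.vert i with hu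
    have hcode := codes_shift hX (hP.2 i) u
    refine hcode x hx x' hx' ?_ p0
      ⟨toR2 (P.vert i), rfl, by
        show toR2 u + toR2 (P.vert i) = toR2 p0
        rw [← toR2_add]; congr 1; rw [hu]; abel⟩
    intro q hq
    obtain ⟨w, hw, hwq⟩ := hq
    have hwq' : toR2 u + w = toR2 q := hwq
    have hweq : w = toR2 (q - u) := by
      rw [toR2_sub, ← hwq', add_sub_cancel_left]
    rw [hweq] at hw
    obtain ⟨hwcar, hwne⟩ := hw
    have hqne : q ≠ p0 := by
      intro h; apply hwne
      show toR2 (q - u) = toR2 (P.vert i)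
      rw [h]; congr 1; rw [hu]; abel
    have hge : 0 ≤ crossZ v (q - p0) := by
      have h' := hHi (q - u) hwcar
      have he : q - u - P.vert i = q - p0 := by rw [hu]; abel
      rwa [he] at h'
    rcases le_or_gt 0 (crossZ v q) with hpos | hneg
    · exact hH q hpos
    · have hqv : crossZ v (q - p0) = crossZ v q - crossZ v p0 := crossZ_sub_right v q p0
      have ht0 : crossZ v (q - p0) = 0 := by omega
      obtain ⟨k, hk⟩ := eq_smul_of_crossZ_eq_zero hprim ht0
      have hkub : k ≤ c := by
        have h' := hcar (i + 1) (q - u) hwcar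
        have he : q - u - P.vert (i + 1) = (k - c) • v := by
          have h'' : q - u - P.vert (i + 1) = (q - p0) - (P.vert (i+1) - P.vert i) := by
            rw [hu]; abel
          have h''' : P.vert (i + 1) - P.vert i = c • v := hcEv
          rw [h'', h''', hk, ← sub_smul]
        rw [he, crossZ_smul_right] at h'
        by_contra hgt
        push_neg at hgt
        have := mul_neg_of_pos_of_neg (by omega : (0:ℤ) < k - c) hEplus
        linarith
      have hklb : 1 ≤ k := by
        have h' := hcar (i - 1) (q - u) hwcar
        have him : i - 1 + 1 = i := by rw [sub_add_cancel]
        have he : q - u - P.vert (i - 1) = k • v + P.edgeVec (i - 1) := by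
          have hE : P.edgeVec (i - 1) = P.vert i - P.vert (i - 1) := by
            show P.vert (i - 1 + 1) - P.vert (i - 1) = _
            rw [him]
          rw [hE, ← hk, hu]; abel
        rw [he, crossZ_add_right, crossZ_smul_right, crossZ_self, add_zero] at h'
        have hk0 : k ≠ 0 := by
          intro h0
          apply hqne
          have hq0 : q - p0 = 0 := by rw [hk, h0, zero_smul]
          exact sub_eq_zero.mp hq0
        by_contra hgt
        push_neg at hgt
        have := mul_neg_of_neg_of_pos (by omega : k < 0) hEminus
        linarith
      have heq : q = p0 + k • v := by rw [← hk]; abel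
      rw [heq]
      exact hB k hklb hkub
  -- THE RIGHT STEP
  have stepR : ∀ x ∈ X, ∀ x' ∈ X,
      (∀ q : Z2, 0 ≤ crossZ v q → x q = x' q) →
      ∀ p0 : Z2, crossZ v p0 = -1 →
      (∀ j : ℤ, -c ≤ j → j ≤ -1 → x (p0 + j • v) = x' (p0 + j • v)) →
      x p0 = x' p0 := by
    intro x hx x' hx' hH p0 hp0 hB
    set u : Z2 := p0 - P.vert (i + 1) with hu
    have hcode := codes_shift hX (hP.2 (i + 1)) u
    refine hcode x hx x' hx' ?_ p0
      ⟨toR2 (P.vert (i + 1)), rfl, by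
        show toR2 u + toR2 (P.vert (i + 1)) = toR2 p0
        rw [← toR2_add]; congr 1; rw [hu]; abel⟩
    intro q hq
    obtain ⟨w, hw, hwq⟩ := hq
    have hwq' : toR2 u + w = toR2 q := hwq
    have hweq : w = toR2 (q - u) := by
      rw [toR2_sub, ← hwq', add_sub_cancel_left]
    rw [hweq] at hw
    obtain ⟨hwcar, hwne⟩ := hw
    have hqne : q ≠ p0 := by
      intro h; apply hwne
      show toR2 (q - u) = toR2 (P.vert (i + 1))
      rw [h]; congr 1; rw [hu]; abel
    have hge : 0 ≤ crossZ v (q - p0) := by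
      have h' := hHi (q - u) hwcar
      have he : q - u - P.vert i = (q - p0) + (P.vert (i+1) - P.vert i) := by
        rw [hu]; abel
      rw [he, crossZ_add_right] at h'
      have h''' : P.vert (i + 1) - P.vert i = c • v := hcEv
      rw [h''', crossZ_smul_right, crossZ_self, mul_zero, add_zero] at h'
      exact h'
    rcases le_or_gt 0 (crossZ v q) with hpos | hneg
    · exact hH q hpos
    · have hqv : crossZ v (q - p0) = crossZ v q - crossZ v p0 := crossZ_sub_right v q p0
      have ht0 : crossZ v (q - p0) = 0 := by omega
      obtain ⟨k, hk⟩ := eq_smul_of_crossZ_eq_zero hprim ht0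
      have hkub : k ≤ -1 := by
        have h' := hcar (i + 1) (q - u) hwcar
        have he : q - u - P.vert (i + 1) = k • v := by
          rw [← hk, hu]; abel
        rw [he, crossZ_smul_right] at h'
        have hk0 : k ≠ 0 := by
          intro h0
          apply hqne
          have : q - p0 = 0 := by rw [hk, h0, zero_smul]
          exact sub_eq_zero.mp this
        rcases hk0.lt_or_gt with h2' | h2'
        · omega
        · have := mul_neg_of_pos_of_neg h2' hEplus
          linarith
      have hklb : -c ≤ k := by
        have h' := hcar (i - 1) (q - u) hwcar
        have him : i - 1 + 1 = i := by rw [sub_add_cancel]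
        have he : q - u - P.vert (i - 1) = (k + c) • v + P.edgeVec (i - 1) := by
          have hE : P.edgeVec (i - 1) = P.vert i - P.vert (i - 1) := by
            show P.vert (i - 1 + 1) - P.vert (i - 1) = _
            rw [him]
          have h''' : P.vert (i + 1) - P.vert i = c • v := hcEv
          rw [hE, add_smul, ← hk, ← h''', hu]; abel
        rw [he, crossZ_add_right, crossZ_smul_right, crossZ_self, add_zero] at h'
        by_contra hgt
        push_neg at hgt
        have := mul_neg_of_neg_of_pos (by omega : k + c < 0) hEminus
        linarith
      have heq : q = p0 + k • v := by rw [← hk]; abel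
      rw [heq]
      exact hB k hklb hkub
  -- assemble
  refine ⟨c.toNat, ?_⟩
  intro z hz m hm x hx x' hx' hagree p hp
  have hz' : crossZ v z = -1 := hz
  have hmc : c ≤ (m : ℤ) := by
    have : c.toNat ≤ m := hm
    omega
  have hH : ∀ q : Z2, 0 ≤ crossZ v q → x q = x' q := by
    intro q hq
    refine hagree q (Or.inl ?_)
    show 0 ≤ (toR2 v).1 * (toR2 q).2 - (toR2 v).2 * (toR2 q).1
    have : ((crossZ v q : ℤ) : ℝ) = (toR2 v).1 * (toR2 q).2 - (toR2 v).2 * (toR2 q).1 := by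
      simp [crossZ, toR2]
    rw [← this]
    exact_mod_cast hq
  have hB : ∀ k : ℤ, 0 ≤ k → k < (m : ℤ) → x (z + k • v) = x' (z + k • v) := by
    intro k hk hkm
    refine hagree (z + k • v) (Or.inr ⟨k.toNat, show k.toNat < m by omega, ?_⟩)
    show toR2 (z + ((k.toNat : ℤ)) • v) = toR2 (z + k • v)
    rw [Int.toNat_of_nonneg hk]
  have crossz : ∀ k : ℤ, crossZ v (z + k • v) = -1 := by
    intro k
    rw [crossZ_add_right, crossZ_smul_right, crossZ_self, mul_zero, add_zero, hz']
  have stepsR : ∀ n : ℕ, ∀ k : ℤ, 0 ≤ k → k < (m : ℤ) + n →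
      x (z + k • v) = x' (z + k • v) := by
    intro n
    induction n with
    | zero => intro k hk hkm; exact hB k hk (by omega)
    | succ n ih =>
      intro k hk hkm
      rcases lt_or_ge k ((m : ℤ) + n) with h | h
      · exact ih k hk h
      · refine stepR x hx x' hx' hH (z + k • v) (crossz k) ?_
        intro j hj1 hj2
        have he : z + k • v + j • v = z + (k + j) • v := by rw [add_smul]; abel
        rw [he]
        exact ih (k + j) (by omega) (by omega)
  have stepsL : ∀ n : ℕ, ∀ k : ℤ, -(n : ℤ) ≤ k → k < (m : ℤ) →
      x (z + k • v) = x' (z + k • v) := by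
    intro n
    induction n with
    | zero => intro k hk hkm; exact hB k (by omega) hkm
    | succ n ih =>
      intro k hk hkm
      rcases le_or_gt (-(n : ℤ)) k with h | h
      · exact ih k h hkm
      · refine stepL x hx x' hx' hH (z + k • v) (crossz k) ?_
        intro j hj1 hj2
        have he : z + k • v + j • v = z + (k + j) • v := by rw [add_smul]; abel
        rw [he]
        exact ih (k + j) (by omega) (by omega)
  have claim : ∀ k : ℤ, x (z + k • v) = x' (z + k • v) := by
    intro k
    rcases lt_or_ge k 0 with h | h
    · exact stepsL (-k).toNat k (by omega) (by omega)
    · exact stepsR ((k - m + 1).toNat) k h (by omega)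
  -- conclude for the target point
  have hpz : crossZ v p = -1 := by
    have hp' : (toR2 v).1 * (toR2 p).2 - (toR2 v).2 * (toR2 p).1 = -1 := hp
    have : ((crossZ v p : ℤ) : ℝ) = (toR2 v).1 * (toR2 p).2 - (toR2 v).2 * (toR2 p).1 := by
      simp [crossZ, toR2]
    rw [hp'] at this
    exact_mod_cast this
  have hpar0 : crossZ v (p - z) = 0 := by
    rw [crossZ_sub_right, hpz, hz']; ring
  obtain ⟨k, hk⟩ := eq_smul_of_crossZ_eq_zero hprim hpar0
  have : p = z + k • v := by rw [← hk]; abel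
  rw [this]
  exact claim k

end PolygonalShifts
end

section
/- Let X be a ℤ²-subshift, let S be a rational sector (with vertex at the origin) that is corner coding for X, and let Y be a recoding of X. Then S is corner coding for Y. -/
namespace PolygonalShifts

/-- a rational sector that is corner coding for `X` is corner coding
for any recoding `Y` of `X`. -/
theorem statement9 {A A' : Type} [Fintype A] [Nonempty A] [Fintype A'] [Nonempty A']
    (X : Set (Config A)) (Y : Set (Config A'))
    (hX : IsSubshift X) (hY : IsSubshift Y) (hrec : IsRecoding X Y)
    (e₁ e₂ : Z2) (he₁ : e₁ ≠ 0) (he₂ : e₂ ≠ 0) (hor : 0 < crossZ e₁ e₂)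
    (hcc : IsCornerCoding X e₁ e₂) :
    IsCornerCoding Y e₁ e₂ := by
  letI : TopologicalSpace A := ⊥
  letI : TopologicalSpace A' := ⊥
  obtain ⟨F, hFfin, Ψ, hΨshift, hΨiff⟩ := hrec
  intro y hy y' hy' hagree p hp
  have hp0 : p = 0 := hp
  subst hp0
  set x : X := Ψ.symm ⟨y, hy⟩ with hxdef
  set x' : X := Ψ.symm ⟨y', hy'⟩ with hx'def
  have hyx : (↑(Ψ x) : Config A') = y := by
    rw [hxdef, Ψ.apply_symm_apply]
  have hyx' : (↑(Ψ x') : Config A') = y' := by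
    rw [hx'def, Ψ.apply_symm_apply]
  have key : ∀ f ∈ F, (x : Config A) (f + 0) = (x' : Config A) (f + 0) := by
    intro f hf
    have hxmem : shiftAct f (x : Config A) ∈ X := hX.2 f _ x.2
    have hx'mem : shiftAct f (x' : Config A) ∈ X := hX.2 f _ x'.2
    have hagree' : ∀ q ∈ SectorZ e₁ e₂ \ {0},
        shiftAct f (x : Config A) q = shiftAct f (x' : Config A) q := by
      intro q hq
      have hyq : (↑(Ψ x) : Config A') q = (↑(Ψ x') : Config A') q := by
        rw [hyx, hyx']; exact hagree q hq
      have := (hΨiff q x x').mp hyq f hf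
      simpa [shiftAct] using this
    have := hcc _ hxmem _ hx'mem hagree' 0 rfl
    simpa [shiftAct] using this
  have := (hΨiff 0 x x').mpr key
  rw [hyx, hyx'] at this
  exact this

end PolygonalShifts
end

section
/- Let X be a ℤ²-subshift and let S be a rational sector that is weakly corner coding for X. Then there exists a recoding Y of X for which S is corner coding. -/
namespace PolygonalShifts

section Statement11Aux

lemma toR2_eq_zero' {p : Z2} : toR2 p = 0 ↔ p = 0 := by
  simp [toR2, Prod.ext_iff]

lemma sector_mem_iff (e₁ e₂ : Z2) (hor : 0 < crossZ e₁ e₂) (p : Z2) :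
    p ∈ SectorZ e₁ e₂ ↔ 0 ≤ crossZ e₁ p ∧ 0 ≤ crossZ p e₂ := by
  have hk : (0:ℝ) < (crossZ e₁ e₂ : ℝ) := by exact_mod_cast hor
  constructor
  · rintro (h | h | ⟨h1, h2⟩)
    · rcases h with h | h | ⟨r₁, r₂, hr₁, hr₂, h⟩
      · exfalso
        have : e₁ = 0 := toR2_eq_zero'.1 h
        subst this; simp [crossZ] at hor
      · have : p = 0 := toR2_eq_zero'.1 h
        subst this; simp [crossZ]
      · have h1 : r₁ * (e₁.1:ℝ) = r₂ * (p.1:ℝ) := congrArg Prod.fst h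
        have h2 : r₁ * (e₁.2:ℝ) = r₂ * (p.2:ℝ) := congrArg Prod.snd h
        have key1 : (crossZ e₁ p : ℝ) * r₂ = 0 := by
          push_cast [crossZ]; linear_combination (e₁.2:ℝ) * h1 - (e₁.1:ℝ) * h2
        have key2 : r₂ * (crossZ p e₂ : ℝ) = r₁ * (crossZ e₁ e₂ : ℝ) := by
          push_cast [crossZ]; linear_combination (-(e₂.2:ℝ)) * h1 + (e₂.1:ℝ) * h2
        constructor
        · rcases mul_eq_zero.1 key1 with h | h
          · exact_mod_cast le_of_eq h.symm
          · exact absurd h (ne_of_gt hr₂)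
        · have hpos : 0 < r₂ * (crossZ p e₂ : ℝ) := by rw [key2]; positivity
          have : (0:ℝ) ≤ (crossZ p e₂ : ℝ) := by nlinarith
          exact_mod_cast this
    · rcases h with h | h | ⟨r₁, r₂, hr₁, hr₂, h⟩
      · exfalso
        have : e₂ = 0 := toR2_eq_zero'.1 h
        subst this; simp [crossZ] at hor
      · have : p = 0 := toR2_eq_zero'.1 h
        subst this; simp [crossZ]
      · have h1 : r₁ * (e₂.1:ℝ) = r₂ * (p.1:ℝ) := congrArg Prod.fst h
        have h2 : r₁ * (e₂.2:ℝ) = r₂ * (p.2:ℝ) := congrArg Prod.snd h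
        have key1 : (crossZ p e₂ : ℝ) * r₂ = 0 := by
          push_cast [crossZ]; linear_combination (e₂.1:ℝ) * h2 - (e₂.2:ℝ) * h1
        have key2 : r₂ * (crossZ e₁ p : ℝ) = r₁ * (crossZ e₁ e₂ : ℝ) := by
          push_cast [crossZ]; linear_combination (-(e₁.1:ℝ)) * h2 + (e₁.2:ℝ) * h1
        constructor
        · have hpos : 0 < r₂ * (crossZ e₁ p : ℝ) := by rw [key2]; positivity
          have : (0:ℝ) ≤ (crossZ e₁ p : ℝ) := by nlinarith
          exact_mod_cast this
        · rcases mul_eq_zero.1 key1 with h | h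
          · exact_mod_cast le_of_eq h.symm
          · exact absurd h (ne_of_gt hr₂)
    · exact ⟨le_of_lt h1, le_of_lt h2⟩
  · rintro ⟨h1, h2⟩
    rcases eq_or_lt_of_le h1 with h1e | h1l
    · left
      have h1e' : e₁.1 * p.2 - e₁.2 * p.1 = 0 := by simpa [crossZ] using h1e.symm
      have hfst : crossZ p e₂ * e₁.1 = crossZ e₁ e₂ * p.1 := by
        simp only [crossZ]; linear_combination (-e₂.1) * h1e'
      have hsnd : crossZ p e₂ * e₁.2 = crossZ e₁ e₂ * p.2 := by
        simp only [crossZ]; linear_combination (-e₂.2) * h1e'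
      rcases eq_or_lt_of_le h2 with h2e | h2l
      · have hp : p = 0 := by
          have f1 : crossZ e₁ e₂ * p.1 = 0 := by rw [← hfst, ← h2e]; ring
          have f2 : crossZ e₁ e₂ * p.2 = 0 := by rw [← hsnd, ← h2e]; ring
          have hne : crossZ e₁ e₂ ≠ 0 := ne_of_gt hor
          have hp1 : p.1 = 0 := (mul_eq_zero.1 f1).resolve_left hne
          have hp2 : p.2 = 0 := (mul_eq_zero.1 f2).resolve_left hne
          exact Prod.ext hp1 hp2
        rw [hp]
        have h0 : toR2 (0:Z2) = 0 := by simp [toR2]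
        rw [h0]; exact SameRay.zero_right _
      · refine Or.inr (Or.inr ⟨(crossZ p e₂ : ℝ), (crossZ e₁ e₂ : ℝ), by exact_mod_cast h2l, hk, ?_⟩)
        apply Prod.ext <;> simp [toR2, Prod.smul_fst, Prod.smul_snd, smul_eq_mul]
        · exact_mod_cast hfst
        · exact_mod_cast hsnd
    · rcases eq_or_lt_of_le h2 with h2e | h2l
      · right; left
        have h2e' : p.1 * e₂.2 - p.2 * e₂.1 = 0 := by simpa [crossZ] using h2e.symm
        have hfst : crossZ e₁ p * e₂.1 = crossZ e₁ e₂ * p.1 := by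
          simp only [crossZ]; linear_combination (-e₁.1) * h2e'
        have hsnd : crossZ e₁ p * e₂.2 = crossZ e₁ e₂ * p.2 := by
          simp only [crossZ]; linear_combination (-e₁.2) * h2e'
        refine Or.inr (Or.inr ⟨(crossZ e₁ p : ℝ), (crossZ e₁ e₂ : ℝ), by exact_mod_cast h1l, hk, ?_⟩)
        apply Prod.ext <;> simp [toR2, Prod.smul_fst, Prod.smul_snd, smul_eq_mul]
        · exact_mod_cast hfst
        · exact_mod_cast hsnd
      · exact Or.inr (Or.inr ⟨h1l, h2l⟩)

lemma finite_box (e₁ e₂ : Z2) (hor : 0 < crossZ e₁ e₂) (B₁ B₂ : ℤ) :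
    {p : Z2 | 0 ≤ crossZ e₁ p ∧ crossZ e₁ p ≤ B₁ ∧ 0 ≤ crossZ p e₂ ∧ crossZ p e₂ ≤ B₂}.Finite := by
  have hinj : Function.Injective (fun p : Z2 => ((crossZ e₁ p, crossZ p e₂) : ℤ × ℤ)) := by
    intro p q h
    simp only [Prod.mk.injEq] at h
    have h1 : crossZ e₁ p = crossZ e₁ q := h.1
    have h2 : crossZ p e₂ = crossZ q e₂ := h.2
    have key : crossZ e₁ e₂ • p = crossZ e₁ e₂ • q := by
      have idp : crossZ e₁ e₂ • p = crossZ p e₂ • e₁ + crossZ e₁ p • e₂ := by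
        apply Prod.ext <;> simp [crossZ] <;> ring
      have idq : crossZ e₁ e₂ • q = crossZ q e₂ • e₁ + crossZ e₁ q • e₂ := by
        apply Prod.ext <;> simp [crossZ] <;> ring
      rw [idp, idq, h1, h2]
    have hne : crossZ e₁ e₂ ≠ 0 := ne_of_gt hor
    have f1 : crossZ e₁ e₂ * p.1 = crossZ e₁ e₂ * q.1 := congrArg Prod.fst key
    have f2 : crossZ e₁ e₂ * p.2 = crossZ e₁ e₂ * q.2 := congrArg Prod.snd key
    exact Prod.ext (mul_left_cancel₀ hne f1) (mul_left_cancel₀ hne f2)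
  have hsub : {p : Z2 | 0 ≤ crossZ e₁ p ∧ crossZ e₁ p ≤ B₁ ∧ 0 ≤ crossZ p e₂ ∧ crossZ p e₂ ≤ B₂}
      ⊆ (fun p : Z2 => ((crossZ e₁ p, crossZ p e₂) : ℤ × ℤ)) ⁻¹' (Set.Icc 0 B₁ ×ˢ Set.Icc 0 B₂) := by
    rintro p ⟨a, b, c, d⟩
    exact ⟨⟨a, b⟩, ⟨c, d⟩⟩
  exact (Set.Finite.preimage hinj.injOn
    (((Set.finite_Icc _ _).prod (Set.finite_Icc _ _)))).subset hsub

lemma cross_sub_left' (e p q : Z2) : crossZ e (p - q) = crossZ e p - crossZ e q := by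
  simp [crossZ]; ring

lemma cross_sub_right' (e p q : Z2) : crossZ (p - q) e = crossZ p e - crossZ q e := by
  simp [crossZ]; ring

lemma recover {A : Type} (X : Set (Config A))
    (hshift : ∀ u : Z2, ∀ x ∈ X, shiftAct u x ∈ X)
    (e₁ e₂ : Z2) (hor : 0 < crossZ e₁ e₂)
    (F₀ : Set Z2)
    (hcode : ∀ F : Set Z2, F.Finite → F ⊆ SectorZ e₁ e₂ →
      CodesZ X (SectorZ e₁ e₂ \ F) (SectorZ e₁ e₂ \ F₀))
    (FS : Set Z2) (f₁ f₂ : Z2) (hf₁ : f₁ ∈ FS) (hf₂ : f₂ ∈ FS)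
    (x x' : Config A) (hx : x ∈ X) (hx' : x' ∈ X)
    (hagree : ∀ f ∈ FS, ∀ u ∈ SectorZ e₁ e₂, u ≠ (0:Z2) → x (f + u) = x' (f + u))
    (fstar c : Z2) (hcS : c ∈ SectorZ e₁ e₂) (hcF₀ : c ∉ F₀)
    (h1 : crossZ e₁ (f₁ - fstar + c) ≤ 0) (h2 : crossZ (f₂ - fstar + c) e₂ ≤ 0) :
    x fstar = x' fstar := by
  set v : Z2 := fstar - c with hv
  set a₁ : Z2 := f₁ - fstar + c with ha₁
  set a₂ : Z2 := f₂ - fstar + c with ha₂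
  set S : Set Z2 := SectorZ e₁ e₂ with hS
  set F' : Set Z2 := {p | p ∈ S ∧ ¬ ((p - a₁ ∈ S ∧ p ≠ a₁) ∨ (p - a₂ ∈ S ∧ p ≠ a₂))} with hF'
  have hF'sub : F' ⊆ S := fun p hp => hp.1
  have hF'fin : F'.Finite := by
    have hsub : F' ⊆ {a₁, a₂} ∪ {p : Z2 | 0 ≤ crossZ e₁ p ∧ crossZ e₁ p ≤ crossZ e₁ a₂ ∧
        0 ≤ crossZ p e₂ ∧ crossZ p e₂ ≤ crossZ a₁ e₂} := by
      rintro p ⟨hpS, hnp⟩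
      by_cases hpa₁ : p = a₁
      · exact Or.inl (Or.inl hpa₁)
      by_cases hpa₂ : p = a₂
      · exact Or.inl (Or.inr hpa₂)
      push_neg at hnp
      obtain ⟨hn₁, hn₂⟩ := hnp
      have hm₁ : p - a₁ ∉ S := fun hm => hpa₁ (hn₁ hm)
      have hm₂ : p - a₂ ∉ S := fun hm => hpa₂ (hn₂ hm)
      have hpS' := (sector_mem_iff e₁ e₂ hor p).1 hpS
      have hc₁ : ¬ (0 ≤ crossZ e₁ (p - a₁) ∧ 0 ≤ crossZ (p - a₁) e₂) := by
        intro hcon; exact hm₁ ((sector_mem_iff e₁ e₂ hor _).2 hcon)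
      have hc₂ : ¬ (0 ≤ crossZ e₁ (p - a₂) ∧ 0 ≤ crossZ (p - a₂) e₂) := by
        intro hcon; exact hm₂ ((sector_mem_iff e₁ e₂ hor _).2 hcon)
      rw [cross_sub_left', cross_sub_right'] at hc₁ hc₂
      right
      constructor
      · exact hpS'.1
      refine ⟨?_, hpS'.2, ?_⟩
      · by_contra hcon; push_neg at hcon
        apply hc₂
        constructor
        · omega
        · have : crossZ (f₂ - fstar + c) e₂ ≤ 0 := h2
          omega
      · by_contra hcon; push_neg at hcon
        apply hc₁
        constructor
        · have : crossZ e₁ (f₁ - fstar + c) ≤ 0 := h1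
          omega
        · omega
    exact (((Set.finite_singleton a₂).insert a₁).union
      (finite_box e₁ e₂ hor _ _)).subset hsub
  have hcd := hcode F' hF'fin hF'sub
  have hsx : shiftAct v x ∈ X := hshift v x hx
  have hsx' : shiftAct v x' ∈ X := hshift v x' hx'
  have hagS : ∀ p ∈ S \ F', shiftAct v x p = shiftAct v x' p := by
    intro p hp
    obtain ⟨hpS, hpF'⟩ := hp
    have hdis : (p - a₁ ∈ S ∧ p ≠ a₁) ∨ (p - a₂ ∈ S ∧ p ≠ a₂) := by
      by_contra hcon; exact hpF' ⟨hpS, hcon⟩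
    rcases hdis with ⟨hmem, hne⟩ | ⟨hmem, hne⟩
    · have e : v + p = f₁ + (p - a₁) := by rw [hv, ha₁]; ring
      show x (v + p) = x' (v + p)
      rw [e]; exact hagree f₁ hf₁ _ hmem (sub_ne_zero.2 hne)
    · have e : v + p = f₂ + (p - a₂) := by rw [hv, ha₂]; ring
      show x (v + p) = x' (v + p)
      rw [e]; exact hagree f₂ hf₂ _ hmem (sub_ne_zero.2 hne)
  have hconc := hcd _ hsx _ hsx' hagS c ⟨hcS, hcF₀⟩
  have e : v + c = fstar := by rw [hv]; ring
  have : x (v + c) = x' (v + c) := hconc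
  rwa [e] at this

lemma pi_bot_eq (ι A : Type*) [Finite ι] :
    (@Pi.topologicalSpace ι (fun _ => A) (fun _ => (⊥ : TopologicalSpace A)))
      = (⊥ : TopologicalSpace (ι → A)) := by
  letI : TopologicalSpace A := ⊥
  haveI : DiscreteTopology A := ⟨rfl⟩
  haveI : DiscreteTopology (ι → A) := Pi.discreteTopology
  exact DiscreteTopology.eq_bot

/-- The sliding block code with window `FT`. -/
def psiRaw {A : Type} (FT : Finset Z2) (x : Config A) :
    Config ({f : Z2 // f ∈ FT} → A) := fun u f => x (f.1 + u)

/-- The inverse map, reading off the coordinate at `0`. -/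
def phiRaw {A : Type} (FT : Finset Z2) (h0 : (0:Z2) ∈ FT)
    (y : Config ({f : Z2 // f ∈ FT} → A)) : Config A := fun u => y u ⟨0, h0⟩

lemma build_recoding {A : Type} [Fintype A] (X : Set (Config A)) (hX : IsSubshift X)
    (e₁ e₂ : Z2) (FS : Set Z2) (hfin : FS.Finite) (h0 : (0:Z2) ∈ FS)
    (key : ∀ x ∈ X, ∀ x' ∈ X,
      (∀ f ∈ FS, ∀ u ∈ SectorZ e₁ e₂, u ≠ (0:Z2) → x (f + u) = x' (f + u)) →
      ∀ f ∈ FS, x f = x' f) :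
    ∃ (A' : Type) (_ : Fintype A') (Y : Set (Config A')),
      IsSubshift Y ∧ IsRecoding X Y ∧ IsCornerCoding Y e₁ e₂ := by
  classical
  letI : TopologicalSpace A := ⊥
  haveI : DiscreteTopology A := ⟨rfl⟩
  set FT : Finset Z2 := hfin.toFinset with hFT
  have h0' : (0:Z2) ∈ FT := hfin.mem_toFinset.2 h0
  have hbot : (⊥ : TopologicalSpace ({f : Z2 // f ∈ FT} → A))
      = @Pi.topologicalSpace {f : Z2 // f ∈ FT} (fun _ => A) (fun _ => ⊥) :=
    (pi_bot_eq _ _).symm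
  have hΨcont : Continuous (psiRaw (A := A) FT) :=
    continuous_pi fun u => continuous_pi fun f => continuous_apply _
  have hΦcont : Continuous (phiRaw (A := A) FT h0') :=
    continuous_pi fun u => (continuous_apply _).comp (continuous_apply u)
  have hΦΨ : ∀ x : Config A, phiRaw FT h0' (psiRaw FT x) = x := by
    intro x; funext u
    show x ((0:Z2) + u) = x u
    rw [zero_add]
  have hcomm' : ∀ (u : Z2) (x : Config A) (w : Z2) (f : {f : Z2 // f ∈ FT}),
      psiRaw FT (shiftAct u x) w f = shiftAct u (psiRaw FT x) w f := by
    intro u x w f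
    show x (u + (f.1 + w)) = x (f.1 + (u + w))
    exact congrArg x (add_left_comm u f.1 w)
  have hcommF : ∀ (u : Z2) (x : Config A),
      psiRaw FT (shiftAct u x) = shiftAct u (psiRaw FT x) := by
    intro u x; funext w f; exact hcomm' u x w f
  set Y : Set (Config ({f : Z2 // f ∈ FT} → A)) := psiRaw FT '' X with hY
  refine ⟨({f : Z2 // f ∈ FT} → A), inferInstance, Y, ?_, ?_, ?_⟩
  · constructor
    · have hXc : IsClosed X := hX.1
      rw [hbot]
      exact ((hXc.isCompact).image hΨcont).isClosed
    · rintro u _ ⟨x, hx, rfl⟩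
      exact ⟨shiftAct u x, hX.2 u x hx, hcommF u x⟩
  · refine ⟨FS, hfin, ?_⟩
    have hto : ∀ x : X, psiRaw FT x.1 ∈ Y := fun x => ⟨x.1, x.2, rfl⟩
    have hinv : ∀ y : Y, phiRaw FT h0' y.1 ∈ X := by
      intro y
      obtain ⟨x, hx, hxy⟩ := y.2
      rw [← hxy, hΦΨ]; exact hx
    have hΨb : @Continuous (Config A) (Z2 → ({f : Z2 // f ∈ FT} → A)) _
        (@Pi.topologicalSpace Z2 (fun _ => ({f : Z2 // f ∈ FT} → A)) (fun _ => ⊥))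
        (psiRaw FT) := by
      rw [hbot]; exact hΨcont
    have hΦb : @Continuous (Z2 → ({f : Z2 // f ∈ FT} → A)) (Config A)
        (@Pi.topologicalSpace Z2 (fun _ => ({f : Z2 // f ∈ FT} → A)) (fun _ => ⊥)) _
        (phiRaw FT h0') := by
      rw [hbot]; exact hΦcont
    letI : TopologicalSpace ({f : Z2 // f ∈ FT} → A) := ⊥
    have hle : ∀ x : X, phiRaw FT h0' (psiRaw FT x.1) = x.1 := fun x => hΦΨ x.1
    refine ⟨⟨Equiv.mk (fun x => ⟨psiRaw FT x.1, hto x⟩)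
      (fun y => ⟨phiRaw FT h0' y.1, hinv y⟩)
      (fun x => Subtype.ext (hle x)) ?_, ?_, ?_⟩, ?_, ?_⟩
    · intro y
      apply Subtype.ext
      obtain ⟨x, hx, hxy⟩ := y.2
      show psiRaw FT (phiRaw FT h0' y.1) = y.1
      rw [← hxy, hΦΨ]
    · exact Continuous.subtype_mk (hΨb.comp continuous_subtype_val) _
    · exact Continuous.subtype_mk (hΦb.comp continuous_subtype_val) _
    · intro u x x' hxx'
      show psiRaw FT x'.1 = shiftAct u (psiRaw FT x.1)
      rw [show x'.1 = shiftAct u x.1 from hxx', hcommF]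
    · intro u x x'
      constructor
      · intro h f hf
        exact congrFun h ⟨f, hfin.mem_toFinset.2 hf⟩
      · intro h
        funext f
        exact h f.1 (hfin.mem_toFinset.1 f.2)
  · rintro y hy y' hy' hag p hp
    have hp0 : p = 0 := hp
    subst hp0
    obtain ⟨x, hx, rfl⟩ := hy
    obtain ⟨x', hx', rfl⟩ := hy'
    have hagx : ∀ f ∈ FS, ∀ u ∈ SectorZ e₁ e₂, u ≠ (0:Z2) → x (f + u) = x' (f + u) := by
      intro f hf u huS hu0
      have := hag u ⟨huS, hu0⟩
      exact congrFun this ⟨f, hfin.mem_toFinset.2 hf⟩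
    have hkey := key x hx x' hx' hagx
    funext f
    have hval := hkey f.1 (hfin.mem_toFinset.1 f.2)
    show x (f.1 + (0:Z2)) = x' (f.1 + (0:Z2))
    simpa using hval

end Statement11Aux

/-- a rational sector that is weakly corner coding for `X` is corner
coding for some recoding `Y` of `X`. -/
theorem statement11 {A : Type} [Fintype A] [Nonempty A] (X : Set (Config A))
    (hX : IsSubshift X)
    (e₁ e₂ : Z2) (he₁ : e₁ ≠ 0) (he₂ : e₂ ≠ 0) (hor : 0 < crossZ e₁ e₂)
    (hwcc : IsWeaklyCornerCoding X e₁ e₂) :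
    ∃ (A' : Type) (_ : Fintype A') (Y : Set (Config A')),
      IsSubshift Y ∧ IsRecoding X Y ∧ IsCornerCoding Y e₁ e₂ := by
  classical
  obtain ⟨F₀, hF₀fin, hF₀S, hcode⟩ := hwcc
  have hκ : 0 < crossZ e₁ e₂ := hor
  have hκ1 : 1 ≤ crossZ e₁ e₂ := hκ
  have hex : ∃ B : ℤ, 0 ≤ B ∧ ∀ q ∈ F₀, |crossZ e₁ q| ≤ B ∧ |crossZ q e₂| ≤ B := by
    refine ⟨((hF₀fin.toFinset.sup fun q => (|crossZ e₁ q| ⊔ |crossZ q e₂|).toNat : ℕ) : ℤ),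
      Int.natCast_nonneg _, ?_⟩
    intro q hq
    have hq' : q ∈ hF₀fin.toFinset := hF₀fin.mem_toFinset.2 hq
    have hle : (|crossZ e₁ q| ⊔ |crossZ q e₂|).toNat ≤
        hF₀fin.toFinset.sup (fun q => (|crossZ e₁ q| ⊔ |crossZ q e₂|).toNat) :=
      Finset.le_sup (f := fun q => (|crossZ e₁ q| ⊔ |crossZ q e₂|).toNat) hq'
    have nn : (0:ℤ) ≤ |crossZ e₁ q| ⊔ |crossZ q e₂| := le_trans (abs_nonneg _) le_sup_left
    have hfull : |crossZ e₁ q| ⊔ |crossZ q e₂| ≤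
        ((hF₀fin.toFinset.sup fun q => (|crossZ e₁ q| ⊔ |crossZ q e₂|).toNat : ℕ) : ℤ) := by
      rw [← Int.toNat_of_nonneg nn]
      exact_mod_cast hle
    exact ⟨le_trans le_sup_left hfull, le_trans le_sup_right hfull⟩
  obtain ⟨B, hB0, hBb⟩ := hex
  have hprod : (0:ℤ) ≤ B * (crossZ e₁ e₂ - 1) := mul_nonneg hB0 (by linarith)
  have hprod2 : (0:ℤ) ≤ (2*B+1) * (crossZ e₁ e₂ - 1) := mul_nonneg (by linarith) (by linarith)
  have hprod3 : (0:ℤ) ≤ (B+1) * (crossZ e₁ e₂ - 1) := mul_nonneg (by linarith) (by linarith)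
  set f₁ : Z2 := (-(2*B+1)) • e₂ with hf₁def
  set f₂ : Z2 := (-(2*B+1)) • e₁ with hf₂def
  set FS : Set Z2 := insert (0:Z2) (insert f₁ (insert f₂ F₀)) with hFSdef
  have hfin : FS.Finite := (((hF₀fin.insert f₂).insert f₁).insert 0)
  have h0 : (0:Z2) ∈ FS := Set.mem_insert _ _
  have hf₁FS : f₁ ∈ FS := Set.mem_insert_iff.2 (Or.inr (Set.mem_insert _ _))
  have hf₂FS : f₂ ∈ FS := Set.mem_insert_iff.2 (Or.inr (Set.mem_insert_iff.2 (Or.inr (Set.mem_insert _ _))))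
  have csl : ∀ (m : ℤ) (u v : Z2), crossZ u (m • v) = m * crossZ u v := by
    intro m u v; simp [crossZ]; ring
  have csr : ∀ (m : ℤ) (u v : Z2), crossZ (m • u) v = m * crossZ u v := by
    intro m u v; simp [crossZ]; ring
  have cself : ∀ u : Z2, crossZ u u = 0 := by intro u; simp [crossZ]; ring
  have c₁f₁ : crossZ e₁ f₁ = -(2*B+1) * crossZ e₁ e₂ := by rw [hf₁def, csl]
  have c₂f₁ : crossZ f₁ e₂ = 0 := by rw [hf₁def, csr, cself]; ring
  have c₁f₂ : crossZ e₁ f₂ = 0 := by rw [hf₂def, csl, cself]; ring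
  have c₂f₂ : crossZ f₂ e₂ = -(2*B+1) * crossZ e₁ e₂ := by rw [hf₂def, csr]
  have caddl : ∀ a b c : Z2, crossZ e₁ (a - b + c) = crossZ e₁ a - crossZ e₁ b + crossZ e₁ c := by
    intro a b c; simp [crossZ]; ring
  have caddr : ∀ a b c : Z2, crossZ (a - b + c) e₂ = crossZ a e₂ - crossZ b e₂ + crossZ c e₂ := by
    intro a b c; simp [crossZ]; ring
  have czl : crossZ e₁ (0:Z2) = 0 := by simp [crossZ]
  have czr : crossZ (0:Z2) e₂ = 0 := by simp [crossZ]
  -- the c's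
  have hcS₁ : ((B+1) • e₁ : Z2) ∈ SectorZ e₁ e₂ := by
    rw [sector_mem_iff e₁ e₂ hor, csl, csr, cself]
    constructor
    · nlinarith
    · nlinarith [hprod3]
  have hcS₂ : ((B+1) • e₂ : Z2) ∈ SectorZ e₁ e₂ := by
    rw [sector_mem_iff e₁ e₂ hor, csl, csr, cself]
    constructor
    · nlinarith [hprod3]
    · nlinarith
  have hcF₁ : ((B+1) • e₁ : Z2) ∉ F₀ := by
    intro hmem
    have hb := (hBb _ hmem).2
    rw [csr] at hb
    have := (abs_le.1 hb).2
    nlinarith [hprod3]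
  have hcF₂ : ((B+1) • e₂ : Z2) ∉ F₀ := by
    intro hmem
    have hb := (hBb _ hmem).1
    rw [csl] at hb
    have := (abs_le.1 hb).2
    nlinarith [hprod3]
  apply build_recoding X hX e₁ e₂ FS hfin h0
  intro x hx x' hx' hag f hf
  have hrec := recover X hX.2 e₁ e₂ hor F₀ hcode FS f₁ f₂ hf₁FS hf₂FS x x' hx hx' hag f
  rw [hFSdef] at hf
  simp only [Set.mem_insert_iff] at hf
  rcases hf with rfl | rfl | rfl | hfF₀
  · -- f = 0, use c = (B+1) • e₁
    apply hrec ((B+1) • e₁) hcS₁ hcF₁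
    · simp only [caddl, caddr, c₁f₁, c₁f₂, c₂f₁, c₂f₂, czl, czr, csl, csr, cself, mul_zero]
      nlinarith [hprod2]
    · simp only [caddl, caddr, c₁f₁, c₁f₂, c₂f₁, c₂f₂, czl, czr, csl, csr, cself, mul_zero]
      nlinarith [hprod]
  · -- f = f₁, use c = (B+1) • e₁
    apply hrec ((B+1) • e₁) hcS₁ hcF₁
    · simp only [caddl, caddr, c₁f₁, c₁f₂, c₂f₁, c₂f₂, czl, czr, csl, csr, cself, mul_zero]
      nlinarith
    · simp only [caddl, caddr, c₁f₁, c₁f₂, c₂f₁, c₂f₂, czl, czr, csl, csr, cself, mul_zero]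
      nlinarith [hprod]
  · -- f = f₂, use c = (B+1) • e₂
    apply hrec ((B+1) • e₂) hcS₂ hcF₂
    · simp only [caddl, caddr, c₁f₁, c₁f₂, c₂f₁, c₂f₂, czl, czr, csl, csr, cself, mul_zero]
      nlinarith [hprod]
    · simp only [caddl, caddr, c₁f₁, c₁f₂, c₂f₁, c₂f₂, czl, czr, csl, csr, cself, mul_zero]
      nlinarith
  · -- f ∈ F₀, use c = (B+1) • e₁
    obtain ⟨hb₁, hb₂⟩ := hBb f hfF₀
    have hb₁' := (abs_le.1 hb₁).1
    have hb₂' := (abs_le.1 hb₂).1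
    apply hrec ((B+1) • e₁) hcS₁ hcF₁
    · simp only [caddl, caddr, c₁f₁, c₁f₂, c₂f₁, c₂f₂, czl, czr, csl, csr, cself, mul_zero]
      nlinarith [hprod2]
    · simp only [caddl, caddr, c₁f₁, c₁f₂, c₂f₁, c₂f₂, czl, czr, csl, csr, cself, mul_zero]
      nlinarith [hprod]


end PolygonalShifts
end
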